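/- arXiv:1805.03405 — 7 statements merged into one kernel-verified Lean document; each statement's English description precedes it below -/
import Mathlib

section
/- Let G be a finite simple split graph with at least two vertices that is H̄-free, and let (K, I) be a split partition of G such that the labeled split graph (G, K, I) is independent-Sperner. Then there exist a partition K = {z} ∪ K¹ ∪ K² and a partition I = I¹ ∪ I² (all parts pairwise disjoint, K¹, K², I¹, I² possibly empty) such that: z is adjacent to every vertex of I¹ and to no vertex of I²; every vertex of K¹ is adjacent to every vertex of I²; no vertex of K² is adjacent to any vertex of I¹; and the labeled split graphs (G[K¹ ∪ I¹], K¹, I¹) and (G[K² ∪ I²], K², I²) induced by K¹ ∪ I¹ and K² ∪ I², respectively, are H̄-free and independent-Sperner. -/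
open Finset

open scoped Classical

/-- A hypergraph (given by its set of hyperedges, each a finite set of vertices)
is 1-Sperner if every two distinct hyperedges `e` and `f` satisfy
`min |e \ f| |f \ e| = 1`. -/
def OneSperner {V : Type*} [DecidableEq V] (E : Set (Finset V)) : Prop :=
  ∀ e ∈ E, ∀ f ∈ E, e ≠ f → min (e \ f).card (f \ e).card = 1

/-- A set of vertices `X` is dependent in the hypergraph with hyperedge set `E`
if it contains some hyperedge; it is independent otherwise. -/
def HypDep {V : Type*} (E : Set (Finset V)) (X : Finset V) : Prop :=
  ∃ e ∈ E, e ⊆ X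

/-- A hypergraph is threshold if there are nonnegative integer vertex weights and a
threshold such that a vertex set has weight at least the threshold iff it contains
a hyperedge. -/
def HypThreshold {V : Type*} [Fintype V] (E : Set (Finset V)) : Prop :=
  ∃ (w : V → ℕ) (t : ℕ), ∀ X : Finset V, (t ≤ ∑ x ∈ X, w x) ↔ HypDep E X

/-- The characteristic vector of a finite vertex set. -/
def chiVec {V : Type*} [DecidableEq V] (X : Finset V) : V → ℕ :=
  fun v => if v ∈ X then 1 else 0

/-- A hypergraph is 2-asummable if there are no two independent sets `A₁, A₂`
and two dependent sets `B₁, B₂` with `χ^{A₁} + χ^{A₂} = χ^{B₁} + χ^{B₂}`. -/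
def TwoAsummable {V : Type*} [DecidableEq V] (E : Set (Finset V)) : Prop :=
  ¬ ∃ A₁ A₂ B₁ B₂ : Finset V,
      ¬ HypDep E A₁ ∧ ¬ HypDep E A₂ ∧ HypDep E B₁ ∧ HypDep E B₂ ∧
      ∀ v, chiVec A₁ v + chiVec A₂ v = chiVec B₁ v + chiVec B₂ v

/-- A graph is threshold if there are nonnegative integer vertex weights and a threshold
such that a vertex set has weight at most the threshold iff it is an independent set. -/
def ThresholdGraph {V : Type*} [Fintype V] (G : SimpleGraph V) : Prop :=
  ∃ (w : V → ℕ) (t : ℕ), ∀ X : Finset V,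
    ((∑ x ∈ X, w x) ≤ t ↔ ∀ u ∈ X, ∀ v ∈ X, ¬ G.Adj u v)

/-- A vertex cover of a graph: every edge has an endpoint in the set. -/
def IsVertexCover {V : Type*} (G : SimpleGraph V) (S : Finset V) : Prop :=
  ∀ u v : V, G.Adj u v → u ∈ S ∨ v ∈ S

/-- The vertex cover hypergraph: hyperedges are the inclusion-minimal vertex covers. -/
def VCHyp {V : Type*} (G : SimpleGraph V) : Set (Finset V) :=
  {S | IsVertexCover G S ∧ ∀ T : Finset V, IsVertexCover G T → T ⊆ S → T = S}

/-- The clique hypergraph: hyperedges are the inclusion-maximal cliques. -/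
def CliqueHyp {V : Type*} (G : SimpleGraph V) : Set (Finset V) :=
  {S | G.IsClique (S : Set V) ∧ ∀ T : Finset V, G.IsClique (T : Set V) → S ⊆ T → T = S}

/-- The closed neighborhood `N[v]` of a vertex, as a finite set. -/
def closedNbhd {V : Type*} [Fintype V] [DecidableEq V] (G : SimpleGraph V)
    [DecidableRel G.Adj] (v : V) : Finset V :=
  insert v (G.neighborFinset v)

/-- The closed neighborhood hypergraph: hyperedges are the inclusion-minimal sets of
the form `N[v]`. -/
def NHyp {V : Type*} [Fintype V] [DecidableEq V] (G : SimpleGraph V)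
    [DecidableRel G.Adj] : Set (Finset V) :=
  {S | (∃ v : V, S = closedNbhd G v) ∧
       ∀ v : V, closedNbhd G v ⊆ S → closedNbhd G v = S}

/-- A dominating set: every vertex is in the set or has a neighbor in it. -/
def IsDomSet {V : Type*} (G : SimpleGraph V) (D : Finset V) : Prop :=
  ∀ v : V, v ∈ D ∨ ∃ u ∈ D, G.Adj u v

/-- The dominating set hypergraph: hyperedges are the inclusion-minimal dominating sets. -/
def DomHyp {V : Type*} (G : SimpleGraph V) : Set (Finset V) :=
  {D | IsDomSet G D ∧ ∀ T : Finset V, IsDomSet G T → T ⊆ D → T = D}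

/-- A graph is domishold if there are nonnegative integer vertex weights and a threshold
such that a vertex set has weight at least the threshold iff it is a dominating set. -/
def Domishold {V : Type*} [Fintype V] (G : SimpleGraph V) : Prop :=
  ∃ (w : V → ℕ) (t : ℕ), ∀ X : Finset V, (t ≤ ∑ x ∈ X, w x) ↔ IsDomSet G X

/-- `(K, I)` is a split partition of `G`: `K` is a clique, `I` an independent set,
they are disjoint and cover all vertices. -/
def IsSplitPartition {V : Type*} [Fintype V] (G : SimpleGraph V) (K I : Finset V) : Prop :=
  Disjoint K I ∧ K ∪ I = Finset.univ ∧ G.IsClique (K : Set V) ∧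
    ∀ u ∈ I, ∀ v ∈ I, ¬ G.Adj u v

/-- The labeled split graph `(G, K, I)` is clique-Sperner: for `u, v ∈ K`,
`N(u) ∩ I ⊆ N(v) ∩ I` implies `u = v`. -/
def CliqueSperner {V : Type*} (G : SimpleGraph V) (K I : Finset V) : Prop :=
  ∀ u ∈ K, ∀ v ∈ K,
    G.neighborSet u ∩ (I : Set V) ⊆ G.neighborSet v ∩ (I : Set V) → u = v

/-- The labeled split graph `(G, K, I)` is independent-Sperner: for `u, v ∈ I`,
`N(u) ⊆ N(v)` implies `u = v`. -/
def IndependentSperner {V : Type*} (G : SimpleGraph V) (K I : Finset V) : Prop :=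
  ∀ u ∈ I, ∀ v ∈ I, G.neighborSet u ⊆ G.neighborSet v → u = v

/-- `(A, B)` is a bipartition of `G` into two disjoint independent sets covering
all vertices. -/
def IsBipartition {V : Type*} [Fintype V] (G : SimpleGraph V) (A B : Finset V) : Prop :=
  Disjoint A B ∧ A ∪ B = Finset.univ ∧
    (∀ u ∈ A, ∀ v ∈ A, ¬ G.Adj u v) ∧ (∀ u ∈ B, ∀ v ∈ B, ¬ G.Adj u v)

/-- The labeled bigraph `(G, A, B)` is right-Sperner: for `u, v ∈ B`,
`N(u) ⊆ N(v)` implies `u = v`. -/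
def RightSperner {V : Type*} (G : SimpleGraph V) (A B : Finset V) : Prop :=
  ∀ u ∈ B, ∀ v ∈ B, G.neighborSet u ⊆ G.neighborSet v → u = v

/-- The graph `2P₃`: disjoint union of the paths `0-1-2` and `3-4-5`. -/
def twoP3 : SimpleGraph (Fin 6) :=
  SimpleGraph.fromRel (fun u v =>
    (u, v) ∈ ([(0,1),(1,2),(3,4),(4,5)] : List (Fin 6 × Fin 6)))

/-- The graph `H`: obtained from `2P₃` (paths `0-1-2` and `3-4-5`) by adding the
edge `1-4` between the two middle vertices. -/
def graphH : SimpleGraph (Fin 6) :=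
  SimpleGraph.fromRel (fun u v =>
    (u, v) ∈ ([(0,1),(1,2),(3,4),(4,5),(1,4)] : List (Fin 6 × Fin 6)))

/-- The domination number: minimum size of a dominating set. -/
noncomputable def gamma {W : Type*} [Fintype W] (G : SimpleGraph W) : ℕ :=
  sInf {n | ∃ D : Finset W, IsDomSet G D ∧ D.card = n}

/-- The total domination number: minimum size of a total dominating set. -/
noncomputable def gammaT {W : Type*} [Fintype W] (G : SimpleGraph W) : ℕ :=
  sInf {n | ∃ D : Finset W, (∀ v : W, ∃ u ∈ D, G.Adj u v) ∧ D.card = n}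

/-- The connected domination number: minimum size of a connected dominating set. -/
noncomputable def gammaC {W : Type*} [Fintype W] (G : SimpleGraph W) : ℕ :=
  sInf {n | ∃ D : Finset W, IsDomSet G D ∧ (G.induce (D : Set W)).Connected ∧ D.card = n}

/-- The co-occurrence graph of a hypergraph: two distinct vertices are adjacent iff
some hyperedge contains both. -/
def coOccurrenceGraph {W : Type*} (E : Set (Finset W)) : SimpleGraph W where
  Adj u v := u ≠ v ∧ ∃ e ∈ E, u ∈ e ∧ v ∈ e
  symm := by
    constructor
    rintro u v ⟨h, e, he, hu, hv⟩
    exact ⟨h.symm, e, he, hv, hu⟩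
  loopless := by
    constructor
    rintro u ⟨h, -⟩
    exact h rfl

/-- The edge-clique split graph of a hypergraph `(V, E)`: vertex set `E ⊕ V`, the
hyperedges form a clique, the vertices an independent set, and `v ∈ V` is adjacent
to `e ∈ E` iff `v ∈ e`. -/
def edgeCliqueGraph {V : Type*} (E : Finset (Finset V)) :
    SimpleGraph ({e // e ∈ E} ⊕ V) where
  Adj x y :=
    match x, y with
    | Sum.inl e, Sum.inl f => e ≠ f
    | Sum.inl e, Sum.inr v => v ∈ (e : Finset V)
    | Sum.inr v, Sum.inl e => v ∈ (e : Finset V)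
    | Sum.inr _, Sum.inr _ => False
  symm := by
    constructor
    rintro (e | u) (f | v) h
    · exact Ne.symm h
    · exact h
    · exact h
    · exact h.elim
  loopless := by
    constructor
    rintro (e | v) h
    · exact h rfl
    · exact h


private def emb6 {V : Type*} (a b c d e f : V) : Fin 6 → V := fun i =>
  if i.val = 0 then a else if i.val = 1 then b else if i.val = 2 then c
    else if i.val = 3 then d else if i.val = 4 then e else f

private lemma graphHc_adj : ∀ i j : Fin 6, graphHᶜ.Adj i j ↔
    (i.val, j.val) ∈ ([(0,2),(2,0),(0,3),(3,0),(0,5),(5,0),(2,3),(3,2),(2,5),(5,2),(3,5),(5,3),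
      (1,3),(3,1),(1,5),(5,1),(0,4),(4,0),(2,4),(4,2)] : List (ℕ × ℕ)) := by
  intro i j
  simp only [SimpleGraph.compl_adj, graphH, SimpleGraph.fromRel_adj]
  fin_cases i <;> fin_cases j <;> decide

set_option maxHeartbeats 1000000 in
private lemma hbar_embed {V : Type*} [Fintype V] [DecidableEq V] (G : SimpleGraph V)
    (K I : Finset V) (hsp : IsSplitPartition G K I)
    {u v x y x' y' : V} (hu : u ∈ I) (hv : v ∈ I)
    (hx : x ∈ G.neighborFinset u \ G.neighborFinset v)
    (hy : y ∈ G.neighborFinset u \ G.neighborFinset v)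
    (hx' : x' ∈ G.neighborFinset v \ G.neighborFinset u)
    (hy' : y' ∈ G.neighborFinset v \ G.neighborFinset u)
    (hxy : x ≠ y) (hxy' : x' ≠ y') :
    Nonempty (graphHᶜ ↪g G) := by
  simp only [Finset.mem_sdiff, SimpleGraph.mem_neighborFinset] at hx hy hx' hy'
  obtain ⟨hux, hvx⟩ := hx
  obtain ⟨huy, hvy⟩ := hy
  obtain ⟨hvx', hux'⟩ := hx'
  obtain ⟨hvy', huy'⟩ := hy'
  obtain ⟨hdisj, huniv, hclique, hindep⟩ := hsp
  have memK : ∀ w : V, G.Adj u w ∨ G.Adj v w → w ∈ K := by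
    intro w haw
    have hw := Finset.mem_univ w
    rw [← huniv] at hw
    simp only [Finset.mem_union] at hw
    rcases hw with h | h
    · exact h
    · rcases haw with h' | h'
      · exact absurd h' (hindep u hu w h)
      · exact absurd h' (hindep v hv w h)
  have hxK := memK x (Or.inl hux)
  have hyK := memK y (Or.inl huy)
  have hx'K := memK x' (Or.inr hvx')
  have hy'K := memK y' (Or.inr hvy')
  have hcl : ∀ a ∈ K, ∀ b ∈ K, a ≠ b → G.Adj a b := fun a ha b hb hab =>
    hclique (Finset.mem_coe.mpr ha) (Finset.mem_coe.mpr hb) hab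
  have huK : u ∉ K := fun h => Finset.disjoint_left.mp hdisj h hu
  have hvK : v ∉ K := fun h => Finset.disjoint_left.mp hdisj h hv
  have huv : u ≠ v := fun h => hvx (h ▸ hux)
  have hxx' : x ≠ x' := fun h => hvx (h ▸ hvx')
  have hxy'2 : x ≠ y' := fun h => hvx (h ▸ hvy')
  have hyx' : y ≠ x' := fun h => hvy (h ▸ hvx')
  have hyy' : y ≠ y' := fun h => hvy (h ▸ hvy')
  have hux_ne : u ≠ x := fun h => huK (h ▸ hxK)
  have huy_ne : u ≠ y := fun h => huK (h ▸ hyK)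
  have hux'_ne : u ≠ x' := fun h => huK (h ▸ hx'K)
  have huy'_ne : u ≠ y' := fun h => huK (h ▸ hy'K)
  have hvx_ne : v ≠ x := fun h => hvK (h ▸ hxK)
  have hvy_ne : v ≠ y := fun h => hvK (h ▸ hyK)
  have hvx'_ne : v ≠ x' := fun h => hvK (h ▸ hx'K)
  have hvy'_ne : v ≠ y' := fun h => hvK (h ▸ hy'K)
  have aXY' : G.Adj x' y' := hcl x' hx'K y' hy'K hxy'
  have aX'X : G.Adj x' x := hcl x' hx'K x hxK (Ne.symm hxx')
  have aX'Y : G.Adj x' y := hcl x' hx'K y hyK (Ne.symm hyx')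
  have aY'X : G.Adj y' x := hcl y' hy'K x hxK (Ne.symm hxy'2)
  have aY'Y : G.Adj y' y := hcl y' hy'K y hyK (Ne.symm hyy')
  have aXYc : G.Adj x y := hcl x hxK y hyK hxy
  have s1 := aXY'.symm; have s2 := aX'X.symm; have s3 := aX'Y.symm
  have s4 := aY'X.symm; have s5 := aY'Y.symm; have s6 := aXYc.symm
  have s7 := hux.symm; have s8 := huy.symm; have s9 := hvx'.symm; have s10 := hvy'.symm
  have nuv : ¬ G.Adj u v := hindep u hu v hv
  have nvu : ¬ G.Adj v u := hindep v hv u hu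
  have n1 : ¬ G.Adj x' u := fun h => hux' h.symm
  have n2 : ¬ G.Adj y' u := fun h => huy' h.symm
  have n3 : ¬ G.Adj x v := fun h => hvx h.symm
  have n4 : ¬ G.Adj y v := fun h => hvy h.symm
  refine ⟨⟨⟨emb6 x' u y' x v y, ?_⟩, ?_⟩⟩
  · intro a b hab
    fin_cases a <;> fin_cases b <;>
      first
        | rfl
        | (simp only [emb6] at hab
           norm_num at hab
           first | exact absurd hab (by assumption) | exact absurd hab.symm (by assumption))
  · intro a b
    fin_cases a <;> fin_cases b <;>
      simp only [Function.Embedding.coeFn_mk, graphHc_adj, emb6] <;>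
      norm_num <;>
      first | assumption | exact G.irrefl | decide

private lemma key_lemma {V : Type*} [DecidableEq V] (K I : Finset V) (n : V → Finset V)
    (hK : K.Nonempty)
    (hsub : ∀ u ∈ I, n u ⊆ K)
    (h2 : ∀ u ∈ I, ∀ v ∈ I, u ≠ v → (n u \ n v).Nonempty)
    (h3 : ∀ u ∈ I, ∀ v ∈ I, u ≠ v → (n u \ n v).card ≤ 1 ∨ (n v \ n u).card ≤ 1) :
    ∃ z ∈ K, ∀ u ∈ I, ∀ v ∈ I, z ∈ n u → z ∉ n v → ∀ w ∈ n u, w ≠ z → w ∈ n v := by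
  by_cases hone : ∀ u ∈ I, ∀ v ∈ I, u = v
  · obtain ⟨z, hz⟩ := hK
    exact ⟨z, hz, fun u hu v hv hzu hzv => absurd ((hone u hu v hv) ▸ hzu) hzv⟩
  · push_neg at hone
    obtain ⟨a0, ha0, b0, hb0, hab0⟩ := hone
    obtain ⟨A, hAI, hAmax⟩ := Finset.exists_max_image I (fun u => (n u).card) ⟨a0, ha0⟩
    have herase : (I.erase A).Nonempty := by
      rcases eq_or_ne a0 A with rfl | h
      · exact ⟨b0, Finset.mem_erase.mpr ⟨Ne.symm hab0, hb0⟩⟩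
      · exact ⟨a0, Finset.mem_erase.mpr ⟨h, ha0⟩⟩
    obtain ⟨B, hBE, hBmin⟩ := Finset.exists_min_image (I.erase A) (fun u => (n u).card) herase
    have hBI : B ∈ I := Finset.mem_of_mem_erase hBE
    have hBA : B ≠ A := Finset.ne_of_mem_erase hBE
    have hmin : ∀ u ∈ I, (n B).card ≤ (n u).card := by
      intro u hu
      rcases eq_or_ne u A with rfl | h
      · exact hAmax B hBI
      · exact hBmin u (Finset.mem_erase.mpr ⟨h, hu⟩)
    have hsing : ∀ u ∈ I, ∀ v ∈ I, u ≠ v → (n u).card ≤ (n v).card → (n u \ n v).card = 1 := by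
      intro u hu v hv huv hle
      have h1le : 1 ≤ (n u \ n v).card := Finset.card_pos.mpr (h2 u hu v hv huv)
      rcases h3 u hu v hv huv with h | h
      · omega
      · have e1 := Finset.card_sdiff_add_card_inter (n u) (n v)
        have e2 := Finset.card_sdiff_add_card_inter (n v) (n u)
        have e3 : (n u ∩ n v).card = (n v ∩ n u).card := by rw [Finset.inter_comm]
        omega
    have hBAcard : (n B \ n A).card = 1 := hsing B hBI A hAI hBA (hAmax B hBI)
    obtain ⟨y, hy⟩ := Finset.card_eq_one.mp hBAcard
    have hyB : y ∈ n B := by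
      have := hy ▸ Finset.mem_singleton_self y
      exact (Finset.mem_sdiff.mp this).1
    have hyA : y ∉ n A := by
      have := hy ▸ Finset.mem_singleton_self y
      exact (Finset.mem_sdiff.mp this).2
    have F1 : ∀ u ∈ I, y ∈ n u → n u \ n A = {y} := by
      intro u hu hyu
      have huA : u ≠ A := by rintro rfl; exact hyA hyu
      obtain ⟨t, ht⟩ := Finset.card_eq_one.mp (hsing u hu A hAI huA (hAmax u hu))
      have hmem : y ∈ n u \ n A := Finset.mem_sdiff.mpr ⟨hyu, hyA⟩
      rw [ht, Finset.mem_singleton] at hmem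
      rw [ht, hmem]
    have F2 : ∀ v ∈ I, y ∉ n v → n B \ n v = {y} := by
      intro v hv hyv
      have hBv : B ≠ v := by rintro rfl; exact hyv hyB
      obtain ⟨t, ht⟩ := Finset.card_eq_one.mp (hsing B hBI v hv hBv (hmin v hv))
      have hmem : y ∈ n B \ n v := Finset.mem_sdiff.mpr ⟨hyB, hyv⟩
      rw [ht, Finset.mem_singleton] at hmem
      rw [ht, hmem]
    refine ⟨y, hsub B hBI hyB, ?_⟩
    intro u hu v hv hyu hyv w hw hwy
    by_contra hwv
    have hFu := F1 u hu hyu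
    have huv : u ≠ v := by rintro rfl; exact hyv hyu
    have hwA : w ∈ n A := by
      by_contra hwa
      have : w ∈ n u \ n A := Finset.mem_sdiff.mpr ⟨hw, hwa⟩
      rw [hFu, Finset.mem_singleton] at this
      exact hwy this
    have hvA : v ≠ A := by rintro rfl; exact hwv hwA
    obtain ⟨x, hx⟩ := Finset.card_eq_one.mp (hsing v hv A hAI hvA (hAmax v hv))
    have hvu1 : (n v \ n u).card = 1 := by
      have h2c : 2 ≤ (n u \ n v).card :=
        Finset.one_lt_card.mpr ⟨y, Finset.mem_sdiff.mpr ⟨hyu, hyv⟩, w,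
          Finset.mem_sdiff.mpr ⟨hw, hwv⟩, Ne.symm hwy⟩
      have h1le : 1 ≤ (n v \ n u).card := Finset.card_pos.mpr (h2 v hv u hu (Ne.symm huv))
      rcases h3 u hu v hv huv with h | h
      · omega
      · omega
    obtain ⟨x2, hx2⟩ := Finset.card_eq_one.mp hvu1
    have hxnv : x ∈ n v := by
      have := hx ▸ Finset.mem_singleton_self x
      exact (Finset.mem_sdiff.mp this).1
    have hxnA : x ∉ n A := by
      have := hx ▸ Finset.mem_singleton_self x
      exact (Finset.mem_sdiff.mp this).2
    have hxy : x ≠ y := by rintro rfl; exact hyv hxnv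
    have hxu : x ∉ n u := by
      intro hxu
      have : x ∈ n u \ n A := Finset.mem_sdiff.mpr ⟨hxu, hxnA⟩
      rw [hFu, Finset.mem_singleton] at this
      exact hxy this
    have hxx2 : x = x2 := by
      have : x ∈ n v \ n u := Finset.mem_sdiff.mpr ⟨hxnv, hxu⟩
      rwa [hx2, Finset.mem_singleton] at this
    have hsubvu : ∀ t, t ∈ n v → t ∈ n A → t ∈ n u := by
      intro t htv htA
      by_contra htu
      have ht : t ∈ n v \ n u := Finset.mem_sdiff.mpr ⟨htv, htu⟩
      rw [hx2, Finset.mem_singleton] at ht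
      rw [ht, ← hxx2] at htA
      exact hxnA htA
    have hF2v := F2 v hv hyv
    have hBu : n B ⊆ n u := by
      intro t htB
      rcases eq_or_ne t y with rfl | hty
      · exact hyu
      · have htv : t ∈ n v := by
          by_contra htv
          have : t ∈ n B \ n v := Finset.mem_sdiff.mpr ⟨htB, htv⟩
          rw [hF2v, Finset.mem_singleton] at this
          exact hty this
        have htA : t ∈ n A := by
          by_contra htA
          have : t ∈ n B \ n A := Finset.mem_sdiff.mpr ⟨htB, htA⟩
          rw [hy, Finset.mem_singleton] at this
          exact hty this
        exact hsubvu t htv htA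
    rcases eq_or_ne u B with rfl | huB
    · have : w ∈ n u \ n v := Finset.mem_sdiff.mpr ⟨hw, hwv⟩
      rw [hF2v, Finset.mem_singleton] at this
      exact hwy this
    · obtain ⟨t, ht⟩ := h2 B hBI u hu (Ne.symm huB)
      exact (Finset.mem_sdiff.mp ht).2 (hBu (Finset.mem_sdiff.mp ht).1)


theorem stmt10 {V : Type*} [Fintype V] [DecidableEq V] (G : SimpleGraph V)
    (hcard : 1 < Fintype.card V)
    (hHbarfree : ¬ Nonempty (graphHᶜ ↪g G))
    (K I : Finset V) (hsp : IsSplitPartition G K I)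
    (his : IndependentSperner G K I) :
    ∃ (z : V) (K1 K2 I1 I2 : Finset V),
      z ∈ K ∧ z ∉ K1 ∧ z ∉ K2 ∧
      insert z (K1 ∪ K2) = K ∧ Disjoint K1 K2 ∧
      I1 ∪ I2 = I ∧ Disjoint I1 I2 ∧
      (∀ v ∈ I1, G.Adj z v) ∧ (∀ v ∈ I2, ¬ G.Adj z v) ∧
      (∀ u ∈ K1, ∀ v ∈ I2, G.Adj u v) ∧
      (∀ u ∈ K2, ∀ v ∈ I1, ¬ G.Adj u v) ∧
      (¬ Nonempty (graphHᶜ ↪g G.induce ((K1 ∪ I1 : Finset V) : Set V))) ∧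
      (¬ Nonempty (graphHᶜ ↪g G.induce ((K2 ∪ I2 : Finset V) : Set V))) ∧
      (∀ u ∈ I1, ∀ v ∈ I1,
        G.neighborSet u ∩ ((K1 ∪ I1 : Finset V) : Set V) ⊆
          G.neighborSet v ∩ ((K1 ∪ I1 : Finset V) : Set V) → u = v) ∧
      (∀ u ∈ I2, ∀ v ∈ I2,
        G.neighborSet u ∩ ((K2 ∪ I2 : Finset V) : Set V) ⊆
          G.neighborSet v ∩ ((K2 ∪ I2 : Finset V) : Set V) → u = v) := by
  have hsp' := hsp
  obtain ⟨hdisj, huniv, hclique, hindep⟩ := hsp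
  have memKI : ∀ w : V, w ∈ K ∨ w ∈ I := by
    intro w
    have hw := Finset.mem_univ w
    rw [← huniv] at hw
    simpa only [Finset.mem_union] using hw
  have hKne : K.Nonempty := by
    rw [Finset.nonempty_iff_ne_empty]
    intro hKe
    obtain ⟨a, b, hab⟩ := Fintype.exists_pair_of_one_lt_card hcard
    have hKI : ∀ w : V, w ∈ I := by
      intro w
      rcases memKI w with h | h
      · rw [hKe] at h; exact absurd h (Finset.notMem_empty w)
      · exact h
    refine hab (his a (hKI a) b (hKI b) ?_)
    intro w hw
    rw [SimpleGraph.mem_neighborSet] at hw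
    exact absurd hw (hindep a (hKI a) w (hKI w))
  have hsubK : ∀ u ∈ I, G.neighborFinset u ⊆ K := by
    intro u hu w hw
    rw [SimpleGraph.mem_neighborFinset] at hw
    rcases memKI w with h | h
    · exact h
    · exact absurd hw (hindep u hu w h)
  have hP2 : ∀ u ∈ I, ∀ v ∈ I, u ≠ v →
      (G.neighborFinset u \ G.neighborFinset v).Nonempty := by
    intro u hu v hv huv
    rw [Finset.sdiff_nonempty]
    intro hss
    refine huv (his u hu v hv ?_)
    intro w hw
    rw [SimpleGraph.mem_neighborSet] at hw
    have hw' : w ∈ G.neighborFinset u := by rwa [SimpleGraph.mem_neighborFinset]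
    have := hss hw'
    rw [SimpleGraph.mem_neighborFinset] at this
    rwa [SimpleGraph.mem_neighborSet]
  have hP3 : ∀ u ∈ I, ∀ v ∈ I, u ≠ v →
      (G.neighborFinset u \ G.neighborFinset v).card ≤ 1 ∨
      (G.neighborFinset v \ G.neighborFinset u).card ≤ 1 := by
    intro u hu v hv huv
    by_contra hc
    push_neg at hc
    obtain ⟨h1, h2⟩ := hc
    obtain ⟨p, hp, q, hq, hpq⟩ := Finset.one_lt_card.mp h1
    obtain ⟨p', hp', q', hq', hpq'⟩ := Finset.one_lt_card.mp h2
    exact hHbarfree (hbar_embed G K I hsp' hu hv hp hq hp' hq' hpq hpq')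
  obtain ⟨z, hzK, hzkey⟩ :=
    key_lemma K I (fun u => G.neighborFinset u) hKne hsubK hP2 hP3
  set I1 : Finset V := I.filter (fun v => G.Adj z v) with hI1def
  set I2 : Finset V := I \ I1 with hI2def
  set K1 : Finset V := (K.erase z).filter (fun w => ∀ v ∈ I2, G.Adj w v) with hK1def
  set K2 : Finset V := (K.erase z) \ K1 with hK2def
  have hI1mem : ∀ v ∈ I1, v ∈ I ∧ G.Adj z v := fun v hv => Finset.mem_filter.mp hv
  have hI2mem : ∀ v ∈ I2, v ∈ I ∧ ¬ G.Adj z v := by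
    intro v hv
    obtain ⟨hvI, hvn⟩ := Finset.mem_sdiff.mp hv
    exact ⟨hvI, fun hadj => hvn (Finset.mem_filter.mpr ⟨hvI, hadj⟩)⟩
  have hK12 : K1 ∪ K2 = K.erase z := Finset.union_sdiff_of_subset (Finset.filter_subset _ _)
  have hI12 : I1 ∪ I2 = I := Finset.union_sdiff_of_subset (Finset.filter_subset _ _)
  have hK1I2 : ∀ u ∈ K1, ∀ v ∈ I2, G.Adj u v := fun u hu => (Finset.mem_filter.mp hu).2
  have hK2I1 : ∀ u ∈ K2, ∀ v ∈ I1, ¬ G.Adj u v := by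
    intro u hu v hv hadj
    obtain ⟨huK, hunot⟩ := Finset.mem_sdiff.mp hu
    have hex : ¬ ∀ v2 ∈ I2, G.Adj u v2 := fun h => hunot (Finset.mem_filter.mpr ⟨huK, h⟩)
    push_neg at hex
    obtain ⟨v2, hv2, hnadj⟩ := hex
    obtain ⟨hvI, hzv⟩ := hI1mem v hv
    obtain ⟨hv2I, hzv2⟩ := hI2mem v2 hv2
    have h1 : z ∈ G.neighborFinset v := by
      rw [SimpleGraph.mem_neighborFinset]; exact hzv.symm
    have h2' : z ∉ G.neighborFinset v2 := by
      rw [SimpleGraph.mem_neighborFinset]; exact fun h => hzv2 h.symm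
    have h3' : u ∈ G.neighborFinset v := by
      rw [SimpleGraph.mem_neighborFinset]; exact hadj.symm
    have huz : u ≠ z := (Finset.mem_erase.mp huK).1
    have := hzkey v hvI v2 hv2I h1 h2' u h3' huz
    rw [SimpleGraph.mem_neighborFinset] at this
    exact hnadj this.symm
  have hznK1 : z ∉ K1 := fun h => (Finset.mem_erase.mp (Finset.filter_subset _ _ h)).1 rfl
  have hznK2 : z ∉ K2 := fun h => (Finset.mem_erase.mp (Finset.mem_sdiff.mp h).1).1 rfl
  refine ⟨z, K1, K2, I1, I2, hzK, hznK1, hznK2, ?_, Finset.disjoint_sdiff, hI12,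
    Finset.disjoint_sdiff, fun v hv => (hI1mem v hv).2, fun v hv => (hI2mem v hv).2,
    hK1I2, hK2I1, ?_, ?_, ?_, ?_⟩
  · rw [hK12]; exact Finset.insert_erase hzK
  · rintro ⟨emb⟩
    exact hHbarfree ⟨(SimpleGraph.Embedding.induce _).comp emb⟩
  · rintro ⟨emb⟩
    exact hHbarfree ⟨(SimpleGraph.Embedding.induce _).comp emb⟩
  · -- independent-Sperner for (K1, I1)
    intro u hu v hv hss
    obtain ⟨huI, hzu⟩ := hI1mem u hu
    obtain ⟨hvI, hzv⟩ := hI1mem v hv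
    refine his u huI v hvI ?_
    intro w hw
    rw [SimpleGraph.mem_neighborSet] at hw
    have hwK : w ∈ K := by
      rcases memKI w with h | h
      · exact h
      · exact absurd hw (hindep u huI w h)
    rw [SimpleGraph.mem_neighborSet]
    rcases eq_or_ne w z with rfl | hwz
    · exact hzv.symm
    · have hwer : w ∈ K1 ∪ K2 := by
        rw [hK12]; exact Finset.mem_erase.mpr ⟨hwz, hwK⟩
      rcases Finset.mem_union.mp hwer with h | h
      · have hmem : w ∈ G.neighborSet u ∩ ((K1 ∪ I1 : Finset V) : Set V) := by
          refine ⟨by rwa [SimpleGraph.mem_neighborSet], ?_⟩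
          rw [Finset.coe_union]
          exact Set.mem_union_left _ (Finset.mem_coe.mpr h)
        have := hss hmem
        rw [Set.mem_inter_iff, SimpleGraph.mem_neighborSet] at this
        exact this.1
      · exact absurd hw.symm (hK2I1 w h u hu)
  · -- independent-Sperner for (K2, I2)
    intro u hu v hv hss
    obtain ⟨huI, hzu⟩ := hI2mem u hu
    obtain ⟨hvI, hzv⟩ := hI2mem v hv
    refine his u huI v hvI ?_
    intro w hw
    rw [SimpleGraph.mem_neighborSet] at hw
    have hwK : w ∈ K := by
      rcases memKI w with h | h
      · exact h
      · exact absurd hw (hindep u huI w h)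
    rw [SimpleGraph.mem_neighborSet]
    rcases eq_or_ne w z with rfl | hwz
    · exact absurd hw.symm hzu
    · have hwer : w ∈ K1 ∪ K2 := by
        rw [hK12]; exact Finset.mem_erase.mpr ⟨hwz, hwK⟩
      rcases Finset.mem_union.mp hwer with h | h
      · exact (hK1I2 w h v hv).symm
      · have hmem : w ∈ G.neighborSet u ∩ ((K2 ∪ I2 : Finset V) : Set V) := by
          refine ⟨by rwa [SimpleGraph.mem_neighborSet], ?_⟩
          rw [Finset.coe_union]
          exact Set.mem_union_left _ (Finset.mem_coe.mpr h)
        have := hss hmem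
        rw [Set.mem_inter_iff, SimpleGraph.mem_neighborSet] at this
        exact this.1
end

section
/- Let G be a finite simple bipartite graph with at least two vertices that is 2P₃-free, and let (A, B) be a bipartition of G such that the labeled bigraph (G, A, B) is right-Sperner. Then there exist a partition A = {z} ∪ A¹ ∪ A² and a partition B = B¹ ∪ B² (all parts pairwise disjoint, A¹, A², B¹, B² possibly empty) such that: z is adjacent to every vertex of B¹ and to no vertex of B²; every vertex of A¹ is adjacent to every vertex of B²; no vertex of A² is adjacent to any vertex of B¹; and the labeled bigraphs (G[A¹ ∪ B¹], A¹, B¹) and (G[A² ∪ B²], A², B²) induced by A¹ ∪ B¹ and A² ∪ B², respectively, are 2P₃-free and right-Sperner. -/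
open Finset

open scoped Classical

lemma twoP3_adj (i j : Fin 6) : twoP3.Adj i j ↔
    (i,j) ∈ ([(0,1),(1,0),(1,2),(2,1),(3,4),(4,3),(4,5),(5,4)] : List (Fin 6 × Fin 6)) := by
  fin_cases i <;> fin_cases j <;>
    simp [twoP3, SimpleGraph.fromRel_adj] <;> decide

lemma embed2P3 {V : Type*} (G : SimpleGraph V) (a1 x a2 b1 y b2 : V)
    (hax1 : G.Adj x a1) (hax2 : G.Adj x a2) (hby1 : G.Adj y b1) (hby2 : G.Adj y b2)
    (ha12 : a1 ≠ a2) (hb12 : b1 ≠ b2) (hxy : ¬ G.Adj x y) (hxyne : x ≠ y)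
    (hxb1 : ¬ G.Adj x b1) (hxb2 : ¬ G.Adj x b2) (hya1 : ¬ G.Adj y a1) (hya2 : ¬ G.Adj y a2)
    (haa : ¬ G.Adj a1 a2) (hab11 : ¬ G.Adj a1 b1) (hab12 : ¬ G.Adj a1 b2)
    (hab21 : ¬ G.Adj a2 b1) (hab22 : ¬ G.Adj a2 b2) (hbb : ¬ G.Adj b1 b2)
    (hxa1 : x ≠ a1) (hxa2 : x ≠ a2) (hxB1 : x ≠ b1) (hxB2 : x ≠ b2)
    (hyA1 : y ≠ a1) (hyA2 : y ≠ a2) (hyB1 : y ≠ b1) (hyB2 : y ≠ b2)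
    (h1 : a1 ≠ b1) (h2 : a1 ≠ b2) (h3 : a2 ≠ b1) (h4 : a2 ≠ b2) :
    Nonempty (twoP3 ↪g G) := by
  refine ⟨⟨⟨fun i => match i with
    | 0 => a1 | 1 => x | 2 => a2 | 3 => b1 | 4 => y | 5 => b2, ?_⟩, ?_⟩⟩
  · intro i j hij
    fin_cases i <;> fin_cases j
    · rfl
    · exact absurd hij (Ne.symm hxa1)
    · exact absurd hij (ha12)
    · exact absurd hij (h1)
    · exact absurd hij (Ne.symm hyA1)
    · exact absurd hij (h2)
    · exact absurd hij (hxa1)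
    · rfl
    · exact absurd hij (hxa2)
    · exact absurd hij (hxB1)
    · exact absurd hij (hxyne)
    · exact absurd hij (hxB2)
    · exact absurd hij (Ne.symm ha12)
    · exact absurd hij (Ne.symm hxa2)
    · rfl
    · exact absurd hij (h3)
    · exact absurd hij (Ne.symm hyA2)
    · exact absurd hij (h4)
    · exact absurd hij (Ne.symm h1)
    · exact absurd hij (Ne.symm hxB1)
    · exact absurd hij (Ne.symm h3)
    · rfl
    · exact absurd hij (Ne.symm hyB1)
    · exact absurd hij (hb12)
    · exact absurd hij (hyA1)
    · exact absurd hij (Ne.symm hxyne)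
    · exact absurd hij (hyA2)
    · exact absurd hij (hyB1)
    · rfl
    · exact absurd hij (hyB2)
    · exact absurd hij (Ne.symm h2)
    · exact absurd hij (Ne.symm hxB2)
    · exact absurd hij (Ne.symm h4)
    · exact absurd hij (Ne.symm hb12)
    · exact absurd hij (Ne.symm hyB2)
    · rfl
  · intro i j
    simp only [twoP3_adj]
    fin_cases i <;> fin_cases j
    · exact iff_of_false (G.irrefl) (by decide)
    · exact iff_of_true (G.adj_symm hax1) (by decide)
    · exact iff_of_false (haa) (by decide)
    · exact iff_of_false (hab11) (by decide)
    · exact iff_of_false (fun h => hya1 (G.adj_symm h)) (by decide)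
    · exact iff_of_false (hab12) (by decide)
    · exact iff_of_true (hax1) (by decide)
    · exact iff_of_false (G.irrefl) (by decide)
    · exact iff_of_true (hax2) (by decide)
    · exact iff_of_false (hxb1) (by decide)
    · exact iff_of_false (hxy) (by decide)
    · exact iff_of_false (hxb2) (by decide)
    · exact iff_of_false (fun h => haa (G.adj_symm h)) (by decide)
    · exact iff_of_true (G.adj_symm hax2) (by decide)
    · exact iff_of_false (G.irrefl) (by decide)
    · exact iff_of_false (hab21) (by decide)
    · exact iff_of_false (fun h => hya2 (G.adj_symm h)) (by decide)
    · exact iff_of_false (hab22) (by decide)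
    · exact iff_of_false (fun h => hab11 (G.adj_symm h)) (by decide)
    · exact iff_of_false (fun h => hxb1 (G.adj_symm h)) (by decide)
    · exact iff_of_false (fun h => hab21 (G.adj_symm h)) (by decide)
    · exact iff_of_false (G.irrefl) (by decide)
    · exact iff_of_true (G.adj_symm hby1) (by decide)
    · exact iff_of_false (hbb) (by decide)
    · exact iff_of_false (hya1) (by decide)
    · exact iff_of_false (fun h => hxy (G.adj_symm h)) (by decide)
    · exact iff_of_false (hya2) (by decide)
    · exact iff_of_true (hby1) (by decide)
    · exact iff_of_false (G.irrefl) (by decide)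
    · exact iff_of_true (hby2) (by decide)
    · exact iff_of_false (fun h => hab12 (G.adj_symm h)) (by decide)
    · exact iff_of_false (fun h => hxb2 (G.adj_symm h)) (by decide)
    · exact iff_of_false (fun h => hab22 (G.adj_symm h)) (by decide)
    · exact iff_of_false (fun h => hbb (G.adj_symm h)) (by decide)
    · exact iff_of_true (G.adj_symm hby2) (by decide)
    · exact iff_of_false (G.irrefl) (by decide)


section Aux

variable {V : Type*} [Fintype V] [DecidableEq V]

lemma aux_mem_or {V : Type*} [Fintype V] (A B : Finset V) (h : A ∪ B = Finset.univ)
    (w : V) : w ∈ A ∨ w ∈ B := by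
  classical
  by_contra hc
  push_neg at hc
  have hw : w ∉ A ∪ B := by
    rw [Finset.mem_union]
    tauto
  rw [h] at hw
  exact hw (Finset.mem_univ w)

lemma aux_nbr_in_A (G : SimpleGraph V) (A B : Finset V) (hbp : IsBipartition G A B)
    {y w : V} (hy : y ∈ B) (h : G.Adj y w) : w ∈ A := by
  obtain ⟨-, hunion, -, hBind⟩ := hbp
  rcases aux_mem_or A B hunion w with h1 | h1
  · exact h1
  · exact absurd h (hBind y hy w h1)

lemma aux_no_two_big (G : SimpleGraph V) (hfree : ¬ Nonempty (twoP3 ↪g G))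
    (A B : Finset V) (hbp : IsBipartition G A B)
    {x y : V} (hx : x ∈ B) (hy : y ∈ B) (hxy : x ≠ y)
    (h1 : 2 ≤ (G.neighborFinset x \ G.neighborFinset y).card)
    (h2 : 2 ≤ (G.neighborFinset y \ G.neighborFinset x).card) : False := by
  obtain ⟨hdisj, hunion, hAind, hBind⟩ := hbp
  obtain ⟨a1, ha1, a2, ha2, ha12⟩ := Finset.one_lt_card.mp h1
  obtain ⟨b1, hb1, b2, hb2, hb12⟩ := Finset.one_lt_card.mp h2
  rw [Finset.mem_sdiff, SimpleGraph.mem_neighborFinset] at ha1 ha2 hb1 hb2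
  have hxa1 : G.Adj x a1 := ha1.1
  have hxa2 : G.Adj x a2 := ha2.1
  have hyb1 : G.Adj y b1 := hb1.1
  have hyb2 : G.Adj y b2 := hb2.1
  have ha1y : ¬ G.Adj y a1 := fun h => ha1.2 (SimpleGraph.mem_neighborFinset _ _ _ |>.mpr h)
  have ha2y : ¬ G.Adj y a2 := fun h => ha2.2 (SimpleGraph.mem_neighborFinset _ _ _ |>.mpr h)
  have hb1x : ¬ G.Adj x b1 := fun h => hb1.2 (SimpleGraph.mem_neighborFinset _ _ _ |>.mpr h)
  have hb2x : ¬ G.Adj x b2 := fun h => hb2.2 (SimpleGraph.mem_neighborFinset _ _ _ |>.mpr h)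
  have hbp' : IsBipartition G A B := ⟨hdisj, hunion, hAind, hBind⟩
  have ha1A : a1 ∈ A := aux_nbr_in_A G A B hbp' hx hxa1
  have ha2A : a2 ∈ A := aux_nbr_in_A G A B hbp' hx hxa2
  have hb1A : b1 ∈ A := aux_nbr_in_A G A B hbp' hy hyb1
  have hb2A : b2 ∈ A := aux_nbr_in_A G A B hbp' hy hyb2
  have hne : ∀ {u v : V}, u ∈ B → v ∈ A → u ≠ v := by
    intro u v hu hv h
    exact Finset.disjoint_left.mp hdisj (h ▸ hv) hu
  have hab1 : a1 ≠ b1 := fun h => ha1y (h ▸ hyb1)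
  have hab2 : a1 ≠ b2 := fun h => ha1y (h ▸ hyb2)
  have hab3 : a2 ≠ b1 := fun h => ha2y (h ▸ hyb1)
  have hab4 : a2 ≠ b2 := fun h => ha2y (h ▸ hyb2)
  exact hfree (embed2P3 G a1 x a2 b1 y b2 hxa1 hxa2 hyb1 hyb2 ha12 hb12
    (hBind x hx y hy) hxy hb1x hb2x ha1y ha2y
    (hAind a1 ha1A a2 ha2A) (hAind a1 ha1A b1 hb1A) (hAind a1 ha1A b2 hb2A)
    (hAind a2 ha2A b1 hb1A) (hAind a2 ha2A b2 hb2A) (hAind b1 hb1A b2 hb2A)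
    (hne hx ha1A) (hne hx ha2A) (hne hx hb1A) (hne hx hb2A)
    (hne hy ha1A) (hne hy ha2A) (hne hy hb1A) (hne hy hb2A)
    hab1 hab2 hab3 hab4)

lemma aux_sdiff_nonempty (G : SimpleGraph V) (A B : Finset V) (hrs : RightSperner G A B)
    {x y : V} (hx : x ∈ B) (hy : y ∈ B) (hxy : x ≠ y) :
    (G.neighborFinset x \ G.neighborFinset y).Nonempty := by
  rw [Finset.sdiff_nonempty]
  intro hsub
  apply hxy
  apply hrs x hx y hy
  intro w hw
  rw [SimpleGraph.mem_neighborSet] at hw ⊢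
  have := hsub (SimpleGraph.mem_neighborFinset _ _ _ |>.mpr hw)
  exact (SimpleGraph.mem_neighborFinset _ _ _).mp this

end Aux


lemma aux_good_exists {V : Type*} [Fintype V] [DecidableEq V] (G : SimpleGraph V)
    (hfree : ¬ Nonempty (twoP3 ↪g G)) (A B : Finset V)
    (hbp : IsBipartition G A B) (hrs : RightSperner G A B) (hA : A.Nonempty) :
    ∃ z ∈ A, ∀ x ∈ B, ∀ y ∈ B, G.Adj z x → ¬ G.Adj z y →
      ∀ a, G.Adj a x → a ≠ z → G.Adj a y := by
  classical
  set c : ℕ := B.card + 1 with hc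
  set μ : V → ℕ := fun z =>
    ∑ w ∈ B.filter (fun w => G.Adj z w), c ^ (G.neighborFinset w).card with hμ
  obtain ⟨z, hzA, hzmin⟩ := A.exists_min_image μ hA
  refine ⟨z, hzA, ?_⟩
  intro x hxB y hyB hzx hzy a hax haz
  by_contra hay
  -- basic memberships
  have hxyne : x ≠ y := fun h => hzy (h ▸ hzx)
  have hzmem : z ∈ G.neighborFinset x \ G.neighborFinset y := by
    rw [Finset.mem_sdiff, SimpleGraph.mem_neighborFinset, SimpleGraph.mem_neighborFinset]
    exact ⟨hzx.symm, fun h => hzy h.symm⟩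
  have hamem : a ∈ G.neighborFinset x \ G.neighborFinset y := by
    rw [Finset.mem_sdiff, SimpleGraph.mem_neighborFinset, SimpleGraph.mem_neighborFinset]
    exact ⟨hax.symm, fun h => hay h.symm⟩
  have h2 : 2 ≤ (G.neighborFinset x \ G.neighborFinset y).card :=
    Finset.one_lt_card.mpr ⟨z, hzmem, a, hamem, Ne.symm haz⟩
  have hle1 : (G.neighborFinset y \ G.neighborFinset x).card ≤ 1 := by
    by_contra h
    exact aux_no_two_big G hfree A B hbp hxB hyB hxyne h2 (by omega)
  have hne : (G.neighborFinset y \ G.neighborFinset x).Nonempty :=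
    aux_sdiff_nonempty G A B hrs hyB hxB (Ne.symm hxyne)
  have hcard1 : (G.neighborFinset y \ G.neighborFinset x).card = 1 := by
    have := Finset.card_pos.mpr hne; omega
  obtain ⟨b, hb⟩ := Finset.card_eq_one.mp hcard1
  have hbmem : b ∈ G.neighborFinset y \ G.neighborFinset x := by rw [hb]; exact Finset.mem_singleton_self b
  rw [Finset.mem_sdiff, SimpleGraph.mem_neighborFinset] at hbmem
  have hyb : G.Adj y b := hbmem.1
  have hbx : b ∉ G.neighborFinset x := hbmem.2
  have hbA : b ∈ A := aux_nbr_in_A G A B hbp hyB hyb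
  have hbz : b ≠ z := by
    intro h
    exact hzy (h ▸ hyb).symm
  -- key degree bound
  have key : ∀ w ∈ B, G.Adj b w → ¬ G.Adj z w →
      (G.neighborFinset w).card < (G.neighborFinset x).card := by
    intro w hwB hbw hzw
    have hwx : x ≠ w := fun h => hzw (h ▸ hzx)
    by_cases hwy : w = y
    · subst hwy
      have e1 : (G.neighborFinset w \ G.neighborFinset x).card
          + (G.neighborFinset w ∩ G.neighborFinset x).card = (G.neighborFinset w).card :=
        Finset.card_sdiff_add_card_inter _ _
      have e2 : (G.neighborFinset x \ G.neighborFinset w).card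
          + (G.neighborFinset x ∩ G.neighborFinset w).card = (G.neighborFinset x).card :=
        Finset.card_sdiff_add_card_inter _ _
      have e3 : (G.neighborFinset w ∩ G.neighborFinset x).card
          = (G.neighborFinset x ∩ G.neighborFinset w).card := by rw [Finset.inter_comm]
      omega
    · -- w ≠ y
      have hzwx : z ∈ G.neighborFinset x \ G.neighborFinset w := by
        rw [Finset.mem_sdiff, SimpleGraph.mem_neighborFinset, SimpleGraph.mem_neighborFinset]
        exact ⟨hzx.symm, fun h => hzw h.symm⟩
      by_cases hbig : 2 ≤ (G.neighborFinset x \ G.neighborFinset w).card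
      · have hle : (G.neighborFinset w \ G.neighborFinset x).card ≤ 1 := by
          by_contra h
          exact aux_no_two_big G hfree A B hbp hxB hwB hwx hbig (by omega)
        have e1 : (G.neighborFinset w \ G.neighborFinset x).card
            + (G.neighborFinset w ∩ G.neighborFinset x).card = (G.neighborFinset w).card :=
          Finset.card_sdiff_add_card_inter _ _
        have e2 : (G.neighborFinset x \ G.neighborFinset w).card
            + (G.neighborFinset x ∩ G.neighborFinset w).card = (G.neighborFinset x).card :=
          Finset.card_sdiff_add_card_inter _ _
        have e3 : (G.neighborFinset w ∩ G.neighborFinset x).card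
            = (G.neighborFinset x ∩ G.neighborFinset w).card := by rw [Finset.inter_comm]
        omega
      · -- N(x) \ N(w) = {z}
        have hcard : (G.neighborFinset x \ G.neighborFinset w).card = 1 := by
          have : 0 < (G.neighborFinset x \ G.neighborFinset w).card :=
            Finset.card_pos.mpr ⟨z, hzwx⟩
          omega
        obtain ⟨t, ht⟩ := Finset.card_eq_one.mp hcard
        have htz : t = z := by
          have h' := ht ▸ hzwx
          exact (Finset.mem_singleton.mp h').symm
        have hsub : ∀ s, G.Adj y s → G.Adj w s := by
          intro s hys
          by_cases hsb : s = b
          · rw [hsb]; exact hbw.symm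
          · have hs1 : s ∈ G.neighborFinset y := by
              rw [SimpleGraph.mem_neighborFinset]; exact hys
            have hs2 : s ∈ G.neighborFinset x := by
              by_contra hcon
              have hmem : s ∈ G.neighborFinset y \ G.neighborFinset x :=
                Finset.mem_sdiff.mpr ⟨hs1, hcon⟩
              rw [hb, Finset.mem_singleton] at hmem
              exact hsb hmem
            have hsz : s ≠ t := by
              intro hst
              apply hzy
              rw [← htz, ← hst]
              exact hys.symm
            have hsn : s ∉ G.neighborFinset x \ G.neighborFinset w := by
              rw [ht, Finset.mem_singleton]; exact hsz
            rw [Finset.mem_sdiff] at hsn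
            push_neg at hsn
            have h2' := hsn hs2
            rw [SimpleGraph.mem_neighborFinset] at h2'
            exact h2'
        have : y = w := by
          apply hrs y hyB w hwB
          intro s hs
          rw [SimpleGraph.mem_neighborSet] at hs ⊢
          exact hsub s hs
        exact absurd this.symm hwy
  -- now μ b < μ z, contradiction with minimality
  have hbnadj : ¬ G.Adj b x := by
    intro h
    apply hbx
    rw [SimpleGraph.mem_neighborFinset]
    exact h.symm
  have hxdeg : 1 ≤ (G.neighborFinset x).card := by
    apply Finset.card_pos.mpr
    exact ⟨z, by rw [SimpleGraph.mem_neighborFinset]; exact hzx.symm⟩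
  set f : V → ℕ := fun w => c ^ (G.neighborFinset w).card with hf
  have hsplitz : μ z = ∑ w ∈ (B.filter (fun w => G.Adj z w)).filter (fun w => G.Adj b w), f w
      + ∑ w ∈ (B.filter (fun w => G.Adj z w)).filter (fun w => ¬ G.Adj b w), f w :=
    (Finset.sum_filter_add_sum_filter_not _ _ _).symm
  have hsplitb : μ b = ∑ w ∈ (B.filter (fun w => G.Adj b w)).filter (fun w => G.Adj z w), f w
      + ∑ w ∈ (B.filter (fun w => G.Adj b w)).filter (fun w => ¬ G.Adj z w), f w :=
    (Finset.sum_filter_add_sum_filter_not _ _ _).symm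
  have hcomm : (B.filter (fun w => G.Adj b w)).filter (fun w => G.Adj z w)
      = (B.filter (fun w => G.Adj z w)).filter (fun w => G.Adj b w) := by
    ext w
    simp only [Finset.mem_filter]
    tauto
  have hS : ∑ w ∈ (B.filter (fun w => G.Adj b w)).filter (fun w => ¬ G.Adj z w), f w
      < c ^ (G.neighborFinset x).card := by
    have hbound : ∀ w ∈ (B.filter (fun w => G.Adj b w)).filter (fun w => ¬ G.Adj z w),
        f w ≤ c ^ ((G.neighborFinset x).card - 1) := by
      intro w hw
      simp only [Finset.mem_filter] at hw
      have := key w hw.1.1 hw.1.2 hw.2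
      exact Nat.pow_le_pow_right (by omega) (by omega)
    calc ∑ w ∈ (B.filter (fun w => G.Adj b w)).filter (fun w => ¬ G.Adj z w), f w
        ≤ ((B.filter (fun w => G.Adj b w)).filter (fun w => ¬ G.Adj z w)).card
          • c ^ ((G.neighborFinset x).card - 1) := Finset.sum_le_card_nsmul _ _ _ hbound
      _ = ((B.filter (fun w => G.Adj b w)).filter (fun w => ¬ G.Adj z w)).card
          * c ^ ((G.neighborFinset x).card - 1) := by rw [smul_eq_mul]
      _ ≤ B.card * c ^ ((G.neighborFinset x).card - 1) := by
          apply Nat.mul_le_mul_right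
          exact Finset.card_le_card (Finset.filter_subset _ _ |>.trans (Finset.filter_subset _ _))
      _ < c * c ^ ((G.neighborFinset x).card - 1) := by
          exact mul_lt_mul_of_pos_right (by omega) (Nat.pow_pos (by omega))
      _ = c ^ (G.neighborFinset x).card := by
          rw [← pow_succ']
          congr 1
          omega
  have hT : c ^ (G.neighborFinset x).card
      ≤ ∑ w ∈ (B.filter (fun w => G.Adj z w)).filter (fun w => ¬ G.Adj b w), f w := by
    have hxmem : x ∈ (B.filter (fun w => G.Adj z w)).filter (fun w => ¬ G.Adj b w) := by
      simp only [Finset.mem_filter]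
      exact ⟨⟨hxB, hzx⟩, hbnadj⟩
    exact Finset.single_le_sum (f := f) (fun i _ => Nat.zero_le _) hxmem
  have hlt : μ b < μ z := by
    rw [hsplitz, hsplitb, hcomm]
    omega
  have := hzmin b hbA
  omega


theorem stmt11 {V : Type*} [Fintype V] [DecidableEq V] (G : SimpleGraph V)
    (hcard : 1 < Fintype.card V)
    (hfree : ¬ Nonempty (twoP3 ↪g G))
    (A B : Finset V) (hbp : IsBipartition G A B) (hrs : RightSperner G A B) :
    ∃ (z : V) (A1 A2 B1 B2 : Finset V),
      z ∈ A ∧ z ∉ A1 ∧ z ∉ A2 ∧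
      insert z (A1 ∪ A2) = A ∧ Disjoint A1 A2 ∧
      B1 ∪ B2 = B ∧ Disjoint B1 B2 ∧
      (∀ v ∈ B1, G.Adj z v) ∧ (∀ v ∈ B2, ¬ G.Adj z v) ∧
      (∀ u ∈ A1, ∀ v ∈ B2, G.Adj u v) ∧
      (∀ u ∈ A2, ∀ v ∈ B1, ¬ G.Adj u v) ∧
      (¬ Nonempty (twoP3 ↪g G.induce ((A1 ∪ B1 : Finset V) : Set V))) ∧
      (¬ Nonempty (twoP3 ↪g G.induce ((A2 ∪ B2 : Finset V) : Set V))) ∧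
      (∀ u ∈ B1, ∀ v ∈ B1,
        G.neighborSet u ∩ ((A1 ∪ B1 : Finset V) : Set V) ⊆
          G.neighborSet v ∩ ((A1 ∪ B1 : Finset V) : Set V) → u = v) ∧
      (∀ u ∈ B2, ∀ v ∈ B2,
        G.neighborSet u ∩ ((A2 ∪ B2 : Finset V) : Set V) ⊆
          G.neighborSet v ∩ ((A2 ∪ B2 : Finset V) : Set V) → u = v) := by
  classical
  obtain ⟨hdisj, hunion, hAind, hBind⟩ := hbp
  have hbp' : IsBipartition G A B := ⟨hdisj, hunion, hAind, hBind⟩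
  have hAne : A.Nonempty := by
    by_contra h
    rw [Finset.not_nonempty_iff_eq_empty] at h
    obtain ⟨u, v, huv⟩ := Fintype.exists_pair_of_one_lt_card hcard
    have huB : u ∈ B := by
      rcases aux_mem_or A B hunion u with h1 | h1
      · simp [h] at h1
      · exact h1
    have hvB : v ∈ B := by
      rcases aux_mem_or A B hunion v with h1 | h1
      · simp [h] at h1
      · exact h1
    apply huv
    apply hrs u huB v hvB
    intro w hw
    rw [SimpleGraph.mem_neighborSet] at hw
    exact absurd (aux_nbr_in_A G A B hbp' huB hw) (by simp [h])
  obtain ⟨z, hzA, hgood⟩ := aux_good_exists G hfree A B hbp' hrs hAne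
  set B1 := B.filter (fun v => G.Adj z v) with hB1def
  set B2 := B.filter (fun v => ¬ G.Adj z v) with hB2def
  set A1 := (A.erase z).filter (fun a => ∀ v ∈ B2, G.Adj a v) with hA1def
  set A2 := (A.erase z).filter (fun a => ¬ ∀ v ∈ B2, G.Adj a v) with hA2def
  have hanti : ∀ u ∈ A2, ∀ v ∈ B1, ¬ G.Adj u v := by
    intro u hu v hv hadj
    obtain ⟨hu1, hu2⟩ := Finset.mem_filter.mp hu
    push_neg at hu2
    obtain ⟨y, hyB2, huy⟩ := hu2
    obtain ⟨hyB, hzy⟩ := Finset.mem_filter.mp hyB2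
    obtain ⟨hvB, hzv⟩ := Finset.mem_filter.mp hv
    have huz : u ≠ z := Finset.ne_of_mem_erase hu1
    exact huy (hgood v hvB y hyB hzv hzy u hadj huz)
  have hcomp : ∀ u ∈ A1, ∀ v ∈ B2, G.Adj u v := by
    intro u hu v hv
    exact (Finset.mem_filter.mp hu).2 v hv
  refine ⟨z, A1, A2, B1, B2, hzA, ?_, ?_, ?_, ?_, ?_, ?_, ?_, ?_, ?_, ?_, ?_, ?_, ?_, ?_⟩
  · intro h
    exact Finset.notMem_erase z A (Finset.mem_of_mem_filter z h)
  · intro h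
    exact Finset.notMem_erase z A (Finset.mem_of_mem_filter z h)
  · rw [hA1def, hA2def, Finset.filter_union_filter_not_eq]
    exact Finset.insert_erase hzA
  · exact Finset.disjoint_filter_filter_not _ _ _
  · rw [hB1def, hB2def]; exact Finset.filter_union_filter_not_eq _ _
  · exact Finset.disjoint_filter_filter_not _ _ _
  · intro v hv; exact (Finset.mem_filter.mp hv).2
  · intro v hv; exact (Finset.mem_filter.mp hv).2
  · exact hcomp
  · exact hanti
  · rintro ⟨e⟩
    exact hfree ⟨(SimpleGraph.Embedding.induce _).comp e⟩
  · rintro ⟨e⟩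
    exact hfree ⟨(SimpleGraph.Embedding.induce _).comp e⟩
  · -- Sperner on B1
    intro u hu v hv h
    obtain ⟨huB, hzu⟩ := Finset.mem_filter.mp hu
    obtain ⟨hvB, hzv⟩ := Finset.mem_filter.mp hv
    apply hrs u huB v hvB
    intro w hw
    rw [SimpleGraph.mem_neighborSet] at hw
    have hwA : w ∈ A := aux_nbr_in_A G A B hbp' huB hw
    by_cases hwz : w = z
    · subst hwz
      exact (SimpleGraph.mem_neighborSet _ _ _).mpr hzv.symm
    · have hwe : w ∈ A.erase z := Finset.mem_erase.mpr ⟨hwz, hwA⟩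
      by_cases hw1 : ∀ t ∈ B2, G.Adj w t
      · have hwA1 : w ∈ A1 := Finset.mem_filter.mpr ⟨hwe, hw1⟩
        have hmem : w ∈ G.neighborSet u ∩ ((A1 ∪ B1 : Finset V) : Set V) := by
          refine ⟨(SimpleGraph.mem_neighborSet _ _ _).mpr hw, ?_⟩
          rw [Finset.coe_union]
          exact Set.mem_union_left _ (Finset.mem_coe.mpr hwA1)
        exact (h hmem).1
      · have hwA2 : w ∈ A2 := Finset.mem_filter.mpr ⟨hwe, hw1⟩
        exact absurd hw.symm (hanti w hwA2 u hu)
  · -- Sperner on B2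
    intro u hu v hv h
    obtain ⟨huB, hzu⟩ := Finset.mem_filter.mp hu
    obtain ⟨hvB, hzv⟩ := Finset.mem_filter.mp hv
    apply hrs u huB v hvB
    intro w hw
    rw [SimpleGraph.mem_neighborSet] at hw
    have hwA : w ∈ A := aux_nbr_in_A G A B hbp' huB hw
    have hwz : w ≠ z := by
      intro h'
      exact hzu (h' ▸ hw).symm
    have hwe : w ∈ A.erase z := Finset.mem_erase.mpr ⟨hwz, hwA⟩
    by_cases hw1 : ∀ t ∈ B2, G.Adj w t
    · have hwA1 : w ∈ A1 := Finset.mem_filter.mpr ⟨hwe, hw1⟩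
      exact (SimpleGraph.mem_neighborSet _ _ _).mpr (hcomp w hwA1 v hv).symm
    · have hwA2 : w ∈ A2 := Finset.mem_filter.mpr ⟨hwe, hw1⟩
      have hmem : w ∈ G.neighborSet u ∩ ((A2 ∪ B2 : Finset V) : Set V) := by
        refine ⟨(SimpleGraph.mem_neighborSet _ _ _).mpr hw, ?_⟩
        rw [Finset.coe_union]
        exact Set.mem_union_left _ (Finset.mem_coe.mpr hwA2)
      exact (h hmem).1
end

section
/- Let G be a finite simple cobipartite graph with at least two vertices that is 2P₃-complement-free (i.e., has no induced subgraph isomorphic to the complement of 2P₃), and let (A, B) be a bipartition of the complement Ḡ such that the labeled bigraph (Ḡ, A, B) is right-Sperner. Then there exist a partition A = {z} ∪ A¹ ∪ A² and a partition B = B¹ ∪ B² (all parts pairwise disjoint, A¹, A², B¹, B² possibly empty) such that in G: A is a clique and B is a clique; z is adjacent to every vertex of B¹ and to no vertex of B²; every vertex of A¹ is adjacent to every vertex of B²; no vertex of A² is adjacent to any vertex of B¹; the induced subgraphs G[A¹ ∪ B¹] and G[A² ∪ B²] have no induced subgraph isomorphic to the complement of 2P₃; and the complements of G[A¹ ∪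 B¹] and G[A² ∪ B²] are bipartite graphs such that the labeled bigraphs (complement of G[A¹ ∪ B¹], A¹, B¹) and (complement of G[A² ∪ B²], A², B²) are right-Sperner. -/
open Finset

open scoped Classical

lemma twoP3_compl_adj : ∀ i j : Fin 6, twoP3ᶜ.Adj i j ↔
    (i, j) ∈ ([(0,2),(2,0),(3,5),(5,3),(0,3),(3,0),(0,4),(4,0),(0,5),(5,0),
      (1,3),(3,1),(1,4),(4,1),(1,5),(5,1),(2,3),(3,2),(2,4),(4,2),(2,5),(5,2)] :
      List (Fin 6 × Fin 6)) := by
  intro i j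
  rw [SimpleGraph.compl_adj]
  rw [show twoP3.Adj i j ↔ i ≠ j ∧ ((i,j) ∈ _ ∨ (j,i) ∈ _) from SimpleGraph.fromRel_adj _ i j]
  fin_cases i <;> fin_cases j <;> decide

lemma cop3 {V : Type*} (G : SimpleGraph V) (v : Fin 6 → V)
    (h01 : v 0 ≠ v 1) (h12 : v 1 ≠ v 2) (h34 : v 3 ≠ v 4) (h45 : v 4 ≠ v 5)
    (n01 : ¬G.Adj (v 0) (v 1)) (n12 : ¬G.Adj (v 1) (v 2))
    (n34 : ¬G.Adj (v 3) (v 4)) (n45 : ¬G.Adj (v 4) (v 5))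
    (a02 : G.Adj (v 0) (v 2)) (a35 : G.Adj (v 3) (v 5))
    (a03 : G.Adj (v 0) (v 3)) (a04 : G.Adj (v 0) (v 4)) (a05 : G.Adj (v 0) (v 5))
    (a13 : G.Adj (v 1) (v 3)) (a14 : G.Adj (v 1) (v 4)) (a15 : G.Adj (v 1) (v 5))
    (a23 : G.Adj (v 2) (v 3)) (a24 : G.Adj (v 2) (v 4)) (a25 : G.Adj (v 2) (v 5)) :
    Nonempty (twoP3ᶜ ↪g G) := by
  have h02 := a02.ne; have h35 := a35.ne
  have h03 := a03.ne; have h04 := a04.ne; have h05 := a05.ne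
  have h13 := a13.ne; have h14 := a14.ne; have h15 := a15.ne
  have h23 := a23.ne; have h24 := a24.ne; have h25 := a25.ne
  have hne : ∀ i j : Fin 6, i ≠ j → v i ≠ v j := by
    intro i j
    fin_cases i <;> fin_cases j <;> intro hij <;>
      first
        | exact absurd rfl hij
        | exact (by assumption)
        | exact Ne.symm (by assumption)
  have hinj : Function.Injective v := by
    intro i j h
    by_contra hcon
    exact hne i j hcon h
  refine ⟨⟨⟨v, hinj⟩, ?_⟩⟩
  intro i j
  rw [twoP3_compl_adj]
  fin_cases i <;> fin_cases j <;>
    first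
      | exact iff_of_false G.irrefl (by decide)
      | exact iff_of_true (by assumption) (by decide)
      | exact iff_of_true (SimpleGraph.Adj.symm (by assumption)) (by decide)
      | exact iff_of_false (by assumption) (by decide)
      | exact iff_of_false (fun h => absurd h.symm (by assumption)) (by decide)

theorem stmt12 {V : Type*} [Fintype V] [DecidableEq V] (G : SimpleGraph V)
    (hcard : 1 < Fintype.card V)
    (hfree : ¬ Nonempty (twoP3ᶜ ↪g G))
    (A B : Finset V) (hbp : IsBipartition Gᶜ A B) (hrs : RightSperner Gᶜ A B) :
    ∃ (z : V) (A1 A2 B1 B2 : Finset V),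
      z ∈ A ∧ z ∉ A1 ∧ z ∉ A2 ∧
      insert z (A1 ∪ A2) = A ∧ Disjoint A1 A2 ∧
      B1 ∪ B2 = B ∧ Disjoint B1 B2 ∧
      G.IsClique (A : Set V) ∧ G.IsClique (B : Set V) ∧
      (∀ v ∈ B1, G.Adj z v) ∧ (∀ v ∈ B2, ¬ G.Adj z v) ∧
      (∀ u ∈ A1, ∀ v ∈ B2, G.Adj u v) ∧
      (∀ u ∈ A2, ∀ v ∈ B1, ¬ G.Adj u v) ∧
      (¬ Nonempty (twoP3ᶜ ↪g G.induce ((A1 ∪ B1 : Finset V) : Set V))) ∧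
      (¬ Nonempty (twoP3ᶜ ↪g G.induce ((A2 ∪ B2 : Finset V) : Set V))) ∧
      (∀ u ∈ B1, ∀ v ∈ B1,
        (∀ w ∈ A1 ∪ B1, w ≠ u → ¬ G.Adj u w → w ≠ v ∧ ¬ G.Adj v w) → u = v) ∧
      (∀ u ∈ B2, ∀ v ∈ B2,
        (∀ w ∈ A2 ∪ B2, w ≠ u → ¬ G.Adj u w → w ≠ v ∧ ¬ G.Adj v w) → u = v) := by
  obtain ⟨hdisjAB, hcover, hAind, hBind⟩ := hbp
  have hmem_univ : ∀ x : V, x ∈ A ∨ x ∈ B := by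
    intro x
    have hx := Finset.mem_univ x
    rw [← hcover] at hx
    simp only [Finset.mem_union] at hx
    exact hx
  have hABne : ∀ a ∈ A, ∀ b ∈ B, a ≠ b := by
    intro a ha b hb h
    exact (Finset.disjoint_left.mp hdisjAB ha) (h ▸ hb)
  set N : V → Finset V := fun b => Finset.univ.filter (fun a => Gᶜ.Adj a b) with hNdef
  have hmemN : ∀ a b : V, a ∈ N b ↔ Gᶜ.Adj a b := by
    intro a b; rw [hNdef]; simp
  have hNA : ∀ b ∈ B, N b ⊆ A := by
    intro b hb a ha
    have hadj := (hmemN a b).mp ha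
    rcases hmem_univ a with h | h
    · exact h
    · exact absurd hadj (hBind a h b hb)
  have hGA : ∀ x y : V, x ∈ A → y ∈ A → x ≠ y → G.Adj x y := by
    intro x y hx hy hxy
    by_contra hno
    exact hAind x hx y hy ((SimpleGraph.compl_adj _ _ _).mpr ⟨hxy, hno⟩)
  have hGB : ∀ x y : V, x ∈ B → y ∈ B → x ≠ y → G.Adj x y := by
    intro x y hx hy hxy
    by_contra hno
    exact hBind x hx y hy ((SimpleGraph.compl_adj _ _ _).mpr ⟨hxy, hno⟩)
  have hGAB : ∀ x y : V, x ∈ A → y ∈ B → x ∉ N y → G.Adj x y := by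
    intro x y hx hy hxny
    by_contra hno
    exact hxny ((hmemN x y).mpr ((SimpleGraph.compl_adj _ _ _).mpr ⟨hABne x hx y hy, hno⟩))
  have hnGAB : ∀ x y : V, x ∈ N y → ¬ G.Adj x y := by
    intro x y hx
    exact ((SimpleGraph.compl_adj _ _ _).mp ((hmemN x y).mp hx)).2
  have hS : ∀ b ∈ B, ∀ b' ∈ B, N b ⊆ N b' → b = b' := by
    intro b hb b' hb' hsub
    apply hrs b hb b' hb'
    intro a ha
    have h1 : a ∈ N b := (hmemN a b).mpr (SimpleGraph.Adj.symm ha)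
    exact SimpleGraph.Adj.symm ((hmemN a b').mp (hsub h1))
  have hP : ∀ b ∈ B, ∀ b' ∈ B, b ≠ b' → (N b).card ≤ (N b').card →
      (N b \ N b').card = 1 := by
    intro b hb b' hb' hne hcardle
    have h1 : (N b \ N b').Nonempty :=
      sdiff_nonempty.mpr (fun hsub => hne (hS b hb b' hb' hsub))
    by_contra hc
    have h2 : 2 ≤ (N b \ N b').card := by
      have := Finset.card_pos.mpr h1
      omega
    have hsz : (N b \ N b').card ≤ (N b' \ N b).card := by
      have e1 := Finset.card_sdiff_add_card_inter (N b) (N b')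
      have e2 := Finset.card_sdiff_add_card_inter (N b') (N b)
      rw [Finset.inter_comm] at e2
      omega
    obtain ⟨a1, ha1, a2, ha2, h12⟩ := Finset.one_lt_card.mp (by omega : 1 < (N b \ N b').card)
    obtain ⟨a3, ha3, a4, ha4, h34⟩ := Finset.one_lt_card.mp (by omega : 1 < (N b' \ N b).card)
    rw [mem_sdiff] at ha1 ha2 ha3 ha4
    have ha1A : a1 ∈ A := hNA b hb ha1.1
    have ha2A : a2 ∈ A := hNA b hb ha2.1
    have ha3A : a3 ∈ A := hNA b' hb' ha3.1
    have ha4A : a4 ∈ A := hNA b' hb' ha4.1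
    have h13 : a1 ≠ a3 := fun h => ha3.2 (h ▸ ha1.1)
    have h14 : a1 ≠ a4 := fun h => ha4.2 (h ▸ ha1.1)
    have h23 : a2 ≠ a3 := fun h => ha3.2 (h ▸ ha2.1)
    have h24 : a2 ≠ a4 := fun h => ha4.2 (h ▸ ha2.1)
    have hbb' : G.Adj b b' := hGB b b' hb hb' hne
    refine hfree (cop3 G ![a1, b, a2, a3, b', a4]
      (hABne a1 ha1A b hb)
      (fun h => (hABne a2 ha2A b hb) h.symm)
      (hABne a3 ha3A b' hb')
      (fun h => (hABne a4 ha4A b' hb') h.symm)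
      (hnGAB a1 b ha1.1)
      (fun h => hnGAB a2 b ha2.1 h.symm)
      (hnGAB a3 b' ha3.1)
      (fun h => hnGAB a4 b' ha4.1 h.symm)
      (hGA a1 a2 ha1A ha2A h12)
      (hGA a3 a4 ha3A ha4A h34)
      (hGA a1 a3 ha1A ha3A h13)
      (hGAB a1 b' ha1A hb' ha1.2)
      (hGA a1 a4 ha1A ha4A h14)
      ((hGAB a3 b ha3A hb ha3.2).symm)
      hbb'
      ((hGAB a4 b ha4A hb ha4.2).symm)
      (hGA a2 a3 ha2A ha3A h23)
      (hGAB a2 b' ha2A hb' ha2.2)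
      (hGA a2 a4 ha2A ha4A h24))
  have hAne : A.Nonempty := by
    rcases Finset.eq_empty_or_nonempty A with hA | hA
    · exfalso
      obtain ⟨u, w, huw⟩ := Fintype.exists_pair_of_one_lt_card hcard
      have hu : u ∈ B := by
        rcases hmem_univ u with h | h
        · rw [hA] at h; exact absurd h (Finset.notMem_empty u)
        · exact h
      have hw : w ∈ B := by
        rcases hmem_univ w with h | h
        · rw [hA] at h; exact absurd h (Finset.notMem_empty w)
        · exact h
      apply huw
      apply hrs u hu w hw
      intro a ha
      exfalso
      have haB : a ∈ B := by
        rcases hmem_univ a with h | h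
        · rw [hA] at h; exact absurd h (Finset.notMem_empty a)
        · exact h
      exact hBind u hu a haB ha
    · exact hA
  -- key: existence of a good vertex z
  have hkey : ∃ z ∈ A, ∀ b ∈ B, ∀ b' ∈ B, z ∈ N b → z ∉ N b' → N b \ {z} ⊆ N b' := by
    by_cases hB2 : ∃ b ∈ B, ∃ b' ∈ B, b ≠ b'
    · obtain ⟨b0, hb0, b0', hb0', hb00⟩ := hB2
      obtain ⟨bmin, hbminB, hbminmin⟩ :=
        Finset.exists_min_image B (fun b => (N b).card) ⟨b0, hb0⟩
      have herase : (B.erase bmin).Nonempty := by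
        rcases eq_or_ne b0 bmin with rfl | hne
        · exact ⟨b0', Finset.mem_erase.mpr ⟨hb00.symm, hb0'⟩⟩
        · exact ⟨b0, Finset.mem_erase.mpr ⟨hne, hb0⟩⟩
      obtain ⟨bmax, hbmaxE, hbmaxmax⟩ :=
        Finset.exists_max_image (B.erase bmin) (fun b => (N b).card) herase
      have hbmaxB : bmax ∈ B := Finset.mem_of_mem_erase hbmaxE
      have hbmne : bmin ≠ bmax := (Finset.ne_of_mem_erase hbmaxE).symm
      have hmaxAll : ∀ b ∈ B, (N b).card ≤ (N bmax).card := by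
        intro b hb
        rcases eq_or_ne b bmin with rfl | hne
        · exact hbminmin bmax hbmaxB
        · exact hbmaxmax b (Finset.mem_erase.mpr ⟨hne, hb⟩)
      obtain ⟨z, hz⟩ := Finset.card_eq_one.mp
        (hP bmin hbminB bmax hbmaxB hbmne (hbminmin bmax hbmaxB))
      have hzmem : z ∈ N bmin ∧ z ∉ N bmax :=
        Finset.mem_sdiff.mp (hz ▸ Finset.mem_singleton_self z)
      refine ⟨z, hNA bmin hbminB hzmem.1, ?_⟩
      have step1 : ∀ b ∈ B, z ∈ N b → N b \ N bmax = {z} := by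
        intro b hb hzb
        have hneq : b ≠ bmax := fun h => hzmem.2 (h ▸ hzb)
        obtain ⟨w, hw⟩ := Finset.card_eq_one.mp (hP b hb bmax hbmaxB hneq (hmaxAll b hb))
        have hzin : z ∈ N b \ N bmax := Finset.mem_sdiff.mpr ⟨hzb, hzmem.2⟩
        rw [hw] at hzin ⊢
        rw [Finset.mem_singleton] at hzin
        rw [hzin]
      have step2 : ∀ f ∈ B, z ∉ N f → N bmin \ N f = {z} := by
        intro f hf hzf
        have hneq : bmin ≠ f := fun h => hzf (h ▸ hzmem.1)
        obtain ⟨w, hw⟩ := Finset.card_eq_one.mp (hP bmin hbminB f hf hneq (hbminmin f hf))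
        have hzin : z ∈ N bmin \ N f := Finset.mem_sdiff.mpr ⟨hzmem.1, hzf⟩
        rw [hw] at hzin ⊢
        rw [Finset.mem_singleton] at hzin
        rw [hzin]
      intro b hb b' hb' hzb hznb' w hw
      rw [Finset.mem_sdiff, Finset.mem_singleton] at hw
      obtain ⟨hwb, hwz⟩ := hw
      by_contra hwnb'
      have hbne : b ≠ b' := fun h => hznb' (h ▸ hzb)
      rcases eq_or_ne b bmin with rfl | hbmin
      · have h4 := step2 b' hb' hznb'
        have : w ∈ N b \ N b' := Finset.mem_sdiff.mpr ⟨hwb, hwnb'⟩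
        rw [h4, Finset.mem_singleton] at this
        exact hwz this
      · obtain ⟨t, ht⟩ := Finset.card_eq_one.mp
          (hP bmin hbminB b hb (Ne.symm hbmin) (hbminmin b hb))
        have htmem : t ∈ N bmin ∧ t ∉ N b :=
          Finset.mem_sdiff.mp (ht ▸ Finset.mem_singleton_self t)
        have htz : t ≠ z := fun h => htmem.2 (h ▸ hzb)
        have htb' : t ∈ N b' := by
          by_contra hcon
          have : t ∈ N bmin \ N b' := Finset.mem_sdiff.mpr ⟨htmem.1, hcon⟩
          rw [step2 b' hb' hznb', Finset.mem_singleton] at this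
          exact htz this
        rcases le_or_gt (N b).card (N b').card with hle | hlt
        · have hcard1 := hP b hb b' hb' hbne hle
          have hsub2 : ({z, w} : Finset V) ⊆ N b \ N b' := by
            intro x hx
            rcases Finset.mem_insert.mp hx with rfl | hx
            · exact Finset.mem_sdiff.mpr ⟨hzb, hznb'⟩
            · rw [Finset.mem_singleton] at hx
              rw [hx]
              exact Finset.mem_sdiff.mpr ⟨hwb, hwnb'⟩
          have : 2 ≤ (N b \ N b').card := by
            have hc2 : ({z, w} : Finset V).card = 2 := Finset.card_pair (Ne.symm hwz)
            calc 2 = ({z, w} : Finset V).card := hc2.symm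
              _ ≤ (N b \ N b').card := Finset.card_le_card hsub2
          omega
        · obtain ⟨y, hy⟩ := Finset.card_eq_one.mp
            (hP b' hb' b hb (Ne.symm hbne) (le_of_lt hlt))
          have hty : t = y := by
            have : t ∈ N b' \ N b := Finset.mem_sdiff.mpr ⟨htb', htmem.2⟩
            rw [hy, Finset.mem_singleton] at this
            exact this
          have hb'max : b' ≠ bmax := by
            intro h
            have := hmaxAll b hb
            rw [h] at hlt
            omega
          obtain ⟨u, hu⟩ := Finset.card_eq_one.mp
            (hP b' hb' bmax hbmaxB hb'max (hmaxAll b' hb'))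
          have humem : u ∈ N b' ∧ u ∉ N bmax :=
            Finset.mem_sdiff.mp (hu ▸ Finset.mem_singleton_self u)
          have htmax : t ∈ N bmax := by
            by_contra hcon
            have : t ∈ N bmin \ N bmax := Finset.mem_sdiff.mpr ⟨htmem.1, hcon⟩
            rw [hz, Finset.mem_singleton] at this
            exact htz this
          have hut : u ≠ t := fun h => humem.2 (h ▸ htmax)
          have hub : u ∈ N b := by
            by_contra hcon
            have : u ∈ N b' \ N b := Finset.mem_sdiff.mpr ⟨humem.1, hcon⟩
            rw [hy, Finset.mem_singleton] at this
            exact hut (this.trans hty.symm)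
          have huz : u = z := by
            have : u ∈ N b \ N bmax := Finset.mem_sdiff.mpr ⟨hub, humem.2⟩
            rw [step1 b hb hzb, Finset.mem_singleton] at this
            exact this
          exact hznb' (huz ▸ humem.1)
    · obtain ⟨z, hz⟩ := hAne
      push_neg at hB2
      refine ⟨z, hz, ?_⟩
      intro b hb b' hb' hzb hznb'
      exact absurd (hB2 b hb b' hb' ▸ hzb) hznb'
  obtain ⟨z, hzA, gz⟩ := hkey
  set B1 : Finset V := B.filter (fun b => ¬ Gᶜ.Adj z b) with hB1def
  set B2 : Finset V := B.filter (fun b => Gᶜ.Adj z b) with hB2def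
  set A1 : Finset V := (A.erase z).filter (fun a => ∀ b ∈ B2, ¬ Gᶜ.Adj a b) with hA1def
  set A2 : Finset V := (A.erase z).filter (fun a => ¬ ∀ b ∈ B2, ¬ Gᶜ.Adj a b) with hA2def
  have hB1mem : ∀ b, b ∈ B1 ↔ b ∈ B ∧ ¬ Gᶜ.Adj z b := by
    intro b; rw [hB1def]; exact Finset.mem_filter
  have hB2mem : ∀ b, b ∈ B2 ↔ b ∈ B ∧ Gᶜ.Adj z b := by
    intro b; rw [hB2def]; exact Finset.mem_filter
  have hA1mem : ∀ a, a ∈ A1 ↔ (a ∈ A.erase z ∧ ∀ b ∈ B2, ¬ Gᶜ.Adj a b) := by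
    intro a; rw [hA1def]; exact Finset.mem_filter
  have hA2mem : ∀ a, a ∈ A2 ↔ (a ∈ A.erase z ∧ ¬ ∀ b ∈ B2, ¬ Gᶜ.Adj a b) := by
    intro a; rw [hA2def]; exact Finset.mem_filter
  -- bullets
  have bul1 : z ∉ A1 := fun h => Finset.notMem_erase z A ((hA1mem z).mp h).1
  have bul2 : z ∉ A2 := fun h => Finset.notMem_erase z A ((hA2mem z).mp h).1
  have bulA : insert z (A1 ∪ A2) = A := by
    rw [hA1def, hA2def, Finset.filter_union_filter_not_eq]
    exact Finset.insert_erase hzA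
  have bulAd : Disjoint A1 A2 := by
    rw [hA1def, hA2def]
    exact Finset.disjoint_filter_filter_not _ _ _
  have bulB : B1 ∪ B2 = B := by
    rw [hB1def, hB2def, Finset.union_comm, Finset.filter_union_filter_not_eq]
  have bulBd : Disjoint B1 B2 := by
    rw [Finset.disjoint_left]
    intro b h1 h2
    exact ((hB1mem b).mp h1).2 ((hB2mem b).mp h2).2
  have bulKA : G.IsClique (A : Set V) := by
    rw [SimpleGraph.isClique_iff]
    intro u hu v hv hne
    exact hGA u v hu hv hne
  have bulKB : G.IsClique (B : Set V) := by
    rw [SimpleGraph.isClique_iff]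
    intro u hu v hv hne
    exact hGB u v hu hv hne
  have bulZ1 : ∀ v ∈ B1, G.Adj z v := by
    intro v hv
    obtain ⟨hvB, hno⟩ := (hB1mem v).mp hv
    by_contra hng
    exact hno ((SimpleGraph.compl_adj _ _ _).mpr ⟨hABne z hzA v hvB, hng⟩)
  have bulZ2 : ∀ v ∈ B2, ¬ G.Adj z v := by
    intro v hv
    exact ((SimpleGraph.compl_adj _ _ _).mp ((hB2mem v).mp hv).2).2
  have bulA1B2 : ∀ u ∈ A1, ∀ v ∈ B2, G.Adj u v := by
    intro u hu v hv
    obtain ⟨huE, hprop⟩ := (hA1mem u).mp hu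
    have huA : u ∈ A := Finset.mem_of_mem_erase huE
    by_contra hng
    exact hprop v hv ((SimpleGraph.compl_adj _ _ _).mpr ⟨hABne u huA v ((hB2mem v).mp hv).1, hng⟩)
  have bulA2B1 : ∀ u ∈ A2, ∀ v ∈ B1, ¬ G.Adj u v := by
    intro u hu v hv
    obtain ⟨huE, hprop⟩ := (hA2mem u).mp hu
    push_neg at hprop
    obtain ⟨b2, hb2, hadj⟩ := hprop
    obtain ⟨hb2B, hzb2⟩ := (hB2mem b2).mp hb2
    obtain ⟨hvB, hzv⟩ := (hB1mem v).mp hv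
    have hzNb2 : z ∈ N b2 := (hmemN z b2).mpr hzb2
    have hzNv : z ∉ N v := fun h => hzv ((hmemN z v).mp h)
    have huNb2 : u ∈ N b2 := (hmemN u b2).mpr hadj
    have huNv : u ∈ N v := by
      apply gz b2 hb2B v hvB hzNb2 hzNv
      rw [Finset.mem_sdiff, Finset.mem_singleton]
      exact ⟨huNb2, (Finset.mem_erase.mp huE).1⟩
    exact hnGAB u v huNv
  have hmemA3 : ∀ w ∈ A, w = z ∨ w ∈ A1 ∨ w ∈ A2 := by
    intro w hw
    rw [← bulA] at hw
    rcases Finset.mem_insert.mp hw with h | h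
    · exact Or.inl h
    · exact Or.inr (Finset.mem_union.mp h)
  refine ⟨z, A1, A2, B1, B2, hzA, bul1, bul2, bulA, bulAd, bulB, bulBd, bulKA, bulKB,
    bulZ1, bulZ2, bulA1B2, bulA2B1, ?_, ?_, ?_, ?_⟩
  · rintro ⟨f⟩
    exact hfree ⟨(SimpleGraph.Embedding.induce _).comp f⟩
  · rintro ⟨f⟩
    exact hfree ⟨(SimpleGraph.Embedding.induce _).comp f⟩
  · -- B1 Sperner
    intro u hu v hv H
    have huB : u ∈ B := ((hB1mem u).mp hu).1
    have hvB : v ∈ B := ((hB1mem v).mp hv).1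
    apply hrs u huB v hvB
    intro w hw
    have hadjuw : Gᶜ.Adj u w := hw
    obtain ⟨hneuw, hnG⟩ := (SimpleGraph.compl_adj _ _ _).mp hadjuw
    show Gᶜ.Adj v w
    rcases hmem_univ w with hwA | hwB
    · rcases hmemA3 w hwA with rfl | hwA1 | hwA2
      · exact absurd ((bulZ1 u hu).symm) hnG
      · have := H w (Finset.mem_union_left _ hwA1) hneuw.symm hnG
        exact (SimpleGraph.compl_adj _ _ _).mpr ⟨this.1.symm, this.2⟩
      · have h1 := bulA2B1 w hwA2 v hv
        have hne : v ≠ w := fun h => (hABne w (Finset.mem_of_mem_erase ((hA2mem w).mp hwA2).1) v hvB) h.symm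
        exact (SimpleGraph.compl_adj _ _ _).mpr ⟨hne, fun h => h1 h.symm⟩
    · exact absurd hadjuw (hBind u huB w hwB)
  · -- B2 Sperner
    intro u hu v hv H
    have huB : u ∈ B := ((hB2mem u).mp hu).1
    have hvB : v ∈ B := ((hB2mem v).mp hv).1
    apply hrs u huB v hvB
    intro w hw
    have hadjuw : Gᶜ.Adj u w := hw
    obtain ⟨hneuw, hnG⟩ := (SimpleGraph.compl_adj _ _ _).mp hadjuw
    show Gᶜ.Adj v w
    rcases hmem_univ w with hwA | hwB
    · rcases hmemA3 w hwA with rfl | hwA1 | hwA2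
      · exact (((hB2mem v).mp hv).2).symm
      · exact absurd hadjuw.symm (((hA1mem w).mp hwA1).2 u hu)
      · have := H w (Finset.mem_union_left _ hwA2) hneuw.symm hnG
        exact (SimpleGraph.compl_adj _ _ _).mpr ⟨this.1.symm, this.2⟩
    · exact absurd hadjuw (hBind u huB w hwB)
end

section
/- Let (G, K, I) be a labeled split graph (finite and simple) that is clique-Sperner and such that G is H-free. Then the hypergraph with vertex set I whose hyperedges are exactly the sets N(v) ∩ I for v ∈ K is 1-Sperner. -/
open Finset

open scoped Classical

set_option maxHeartbeats 1000000 in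
theorem stmt13 {V : Type*} [Fintype V] [DecidableEq V] (G : SimpleGraph V)
    [DecidableRel G.Adj] (K I : Finset V)
    (hsp : IsSplitPartition G K I) (hcs : CliqueSperner G K I)
    (hHfree : ¬ Nonempty (graphH ↪g G)) :
    OneSperner {e : Finset V | ∃ v ∈ K, e = G.neighborFinset v ∩ I} := by
  classical
  rintro e ⟨u, hu, rfl⟩ f ⟨v, hv, rfl⟩ hef
  obtain ⟨hK, hcov, hclq, hind⟩ := hsp
  have hKI : ∀ a ∈ K, a ∉ I := fun a ha hai =>
    Finset.disjoint_left.mp hK ha hai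
  have huv : u ≠ v := fun h => hef (by rw [h])
  have key : ∀ a b : V, a ∈ K → b ∈ K →
      G.neighborFinset a ∩ I ⊆ G.neighborFinset b ∩ I → a = b := by
    intro a b ha hb hsub
    apply hcs a ha b hb
    rintro z ⟨hz1, hz2⟩
    have hmem : z ∈ G.neighborFinset a ∩ I := by
      simp only [Finset.mem_inter, SimpleGraph.mem_neighborFinset]
      exact ⟨hz1, hz2⟩
    have := hsub hmem
    simp only [Finset.mem_inter, SimpleGraph.mem_neighborFinset] at this
    exact ⟨this.1, this.2⟩
  have h1 : ((G.neighborFinset u ∩ I) \ (G.neighborFinset v ∩ I)).Nonempty := by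
    rw [Finset.sdiff_nonempty]
    exact fun hsub => huv (key u v hu hv hsub)
  have h2 : ((G.neighborFinset v ∩ I) \ (G.neighborFinset u ∩ I)).Nonempty := by
    rw [Finset.sdiff_nonempty]
    exact fun hsub => huv (key v u hv hu hsub).symm
  by_contra hmin
  have hge1 : 2 ≤ ((G.neighborFinset u ∩ I) \ (G.neighborFinset v ∩ I)).card ∧
      2 ≤ ((G.neighborFinset v ∩ I) \ (G.neighborFinset u ∩ I)).card := by
    have c1 := Finset.card_pos.mpr h1
    have c2 := Finset.card_pos.mpr h2
    omega
  obtain ⟨x, hx, y, hy, hxy⟩ := Finset.one_lt_card.mp hge1.1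
  obtain ⟨x', hx', y', hy', hxy'⟩ := Finset.one_lt_card.mp hge1.2
  -- unpack memberships
  simp only [Finset.mem_sdiff, Finset.mem_inter, SimpleGraph.mem_neighborFinset,
    not_and] at hx hy hx' hy'
  obtain ⟨⟨aux, hxI⟩, hxnv⟩ := hx
  obtain ⟨⟨auy, hyI⟩, hynv⟩ := hy
  obtain ⟨⟨avx', hx'I⟩, hx'nu⟩ := hx'
  obtain ⟨⟨avy', hy'I⟩, hy'nu⟩ := hy'
  have nvx : ¬ G.Adj v x := fun h => hxnv h hxI
  have nvy : ¬ G.Adj v y := fun h => hynv h hyI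
  have nux' : ¬ G.Adj u x' := fun h => hx'nu h hx'I
  have nuy' : ¬ G.Adj u y' := fun h => hy'nu h hy'I
  have auv : G.Adj u v := hclq hu hv huv
  -- distinctness
  have hxx' : x ≠ x' := fun h => nvx (h ▸ avx')
  have hxy'' : x ≠ y' := fun h => nvx (h ▸ avy')
  have hyx' : y ≠ x' := fun h => nvy (h ▸ avx')
  have hyy' : y ≠ y' := fun h => nvy (h ▸ avy')
  have hux : u ≠ x := fun h => hKI u hu (h ▸ hxI)
  have huy : u ≠ y := fun h => hKI u hu (h ▸ hyI)
  have hux'2 : u ≠ x' := fun h => hKI u hu (h ▸ hx'I)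
  have huy'2 : u ≠ y' := fun h => hKI u hu (h ▸ hy'I)
  have hvx : v ≠ x := fun h => hKI v hv (h ▸ hxI)
  have hvy : v ≠ y := fun h => hKI v hv (h ▸ hyI)
  have hvx' : v ≠ x' := fun h => hKI v hv (h ▸ hx'I)
  have hvy' : v ≠ y' := fun h => hKI v hv (h ▸ hy'I)
  -- independent set non-adjacencies
  have nxy : ¬ G.Adj x y := hind x hxI y hyI
  have nxx' : ¬ G.Adj x x' := hind x hxI x' hx'I
  have nxy' : ¬ G.Adj x y' := hind x hxI y' hy'I
  have nyx' : ¬ G.Adj y x' := hind y hyI x' hx'I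
  have nyy' : ¬ G.Adj y y' := hind y hyI y' hy'I
  have nx'y' : ¬ G.Adj x' y' := hind x' hx'I y' hy'I
  -- build the embedding of H
  set m : Fin 6 → V := fun i =>
    if i.val = 0 then x else if i.val = 1 then u else if i.val = 2 then y
    else if i.val = 3 then x' else if i.val = 4 then v else y' with hm
  have hinj : Function.Injective m := by
    intro a b hab
    fin_cases a <;> fin_cases b <;> simp only [hm] at hab <;> norm_num at hab ⊢ <;>
      first
      | exact absurd hab hux.symm | exact absurd hab hux
      | exact absurd hab hxy | exact absurd hab hxy.symm
      | exact absurd hab hxx' | exact absurd hab hxx'.symm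
      | exact absurd hab hvx.symm | exact absurd hab hvx
      | exact absurd hab hxy'' | exact absurd hab hxy''.symm
      | exact absurd hab huy | exact absurd hab huy.symm
      | exact absurd hab hux'2 | exact absurd hab hux'2.symm
      | exact absurd hab huv | exact absurd hab huv.symm
      | exact absurd hab huy'2 | exact absurd hab huy'2.symm
      | exact absurd hab hyx' | exact absurd hab hyx'.symm
      | exact absurd hab hvy.symm | exact absurd hab hvy
      | exact absurd hab hyy' | exact absurd hab hyy'.symm
      | exact absurd hab hvx'.symm | exact absurd hab hvx'
      | exact absurd hab hxy'.symm | exact absurd hab hxy'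
      | exact absurd hab hvy'.symm | exact absurd hab hvy'
  apply hHfree
  refine ⟨⟨⟨m, hinj⟩, ?_⟩⟩
  intro a b
  fin_cases a <;> fin_cases b <;>
    simp only [hm, Function.Embedding.coeFn_mk, graphH, SimpleGraph.fromRel_adj,
      List.mem_cons, List.mem_singleton, Prod.mk.injEq, List.not_mem_nil] <;>
    norm_num [Fin.ext_iff, show ((0:Fin 6):ℕ)=0 from rfl, show ((1:Fin 6):ℕ)=1 from rfl,
      show ((2:Fin 6):ℕ)=2 from rfl, show ((3:Fin 6):ℕ)=3 from rfl,
      show ((4:Fin 6):ℕ)=4 from rfl, show ((5:Fin 6):ℕ)=5 from rfl] <;>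
    first
      | exact auv | exact auv.symm
      | exact aux | exact aux.symm
      | exact auy | exact auy.symm
      | exact avx' | exact avx'.symm
      | exact avy' | exact avy'.symm
      | exact nxy | exact fun h => nxy h.symm
      | exact nxx' | exact fun h => nxx' h.symm
      | exact nxy' | exact fun h => nxy' h.symm
      | exact nyx' | exact fun h => nyx' h.symm
      | exact nyy' | exact fun h => nyy' h.symm
      | exact nx'y' | exact fun h => nx'y' h.symm
      | exact nvx | exact fun h => nvx h.symm
      | exact nvy | exact fun h => nvy h.symm
      | exact nux' | exact fun h => nux' h.symm
      | exact nuy' | exact fun h => nuy' h.symm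
end

section
/- Let (G, A, B) be a labeled bigraph (finite and simple) that is right-Sperner and such that G is 2P₃-free. Then the hypergraph with vertex set A whose hyperedges are exactly the sets N(v) for v ∈ B is 1-Sperner. -/
open Finset

open scoped Classical

instance : DecidableRel twoP3.Adj := fun i j =>
  decidable_of_iff _ (SimpleGraph.fromRel_adj _ i j).symm

set_option maxHeartbeats 1000000 in
theorem stmt14 {V : Type*} [Fintype V] [DecidableEq V] (G : SimpleGraph V)
    [DecidableRel G.Adj] (A B : Finset V)
    (hbp : IsBipartition G A B) (hrs : RightSperner G A B)
    (hfree : ¬ Nonempty (twoP3 ↪g G)) :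
    OneSperner {e : Finset V | ∃ v ∈ B, e = G.neighborFinset v} := by
  rintro e ⟨u, hu, rfl⟩ f ⟨v, hv, rfl⟩ hef
  obtain ⟨hdisj, hcover, hAind, hBind⟩ := hbp
  have huv : u ≠ v := fun h => hef (by rw [h])
  have hsub1 : ¬ G.neighborFinset u ⊆ G.neighborFinset v := by
    intro hsub
    exact huv (hrs u hu v hv (fun x hx => by
      have := hsub (by simpa using hx); simpa using this))
  have hsub2 : ¬ G.neighborFinset v ⊆ G.neighborFinset u := by
    intro hsub
    exact huv.symm (hrs v hv u hu (fun x hx => by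
      have := hsub (by simpa using hx); simpa using this))
  have h1 : 1 ≤ (G.neighborFinset u \ G.neighborFinset v).card := by
    rw [Nat.one_le_iff_ne_zero, Ne, Finset.card_eq_zero, Finset.sdiff_eq_empty_iff_subset]
    exact hsub1
  have h2 : 1 ≤ (G.neighborFinset v \ G.neighborFinset u).card := by
    rw [Nat.one_le_iff_ne_zero, Ne, Finset.card_eq_zero, Finset.sdiff_eq_empty_iff_subset]
    exact hsub2
  by_contra hmin
  have h1' : 2 ≤ (G.neighborFinset u \ G.neighborFinset v).card := by
    rcases Nat.lt_or_ge (G.neighborFinset u \ G.neighborFinset v).card 2 with h | h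
    · exact absurd (by omega : min (G.neighborFinset u \ G.neighborFinset v).card
        (G.neighborFinset v \ G.neighborFinset u).card = 1) hmin
    · exact h
  have h2' : 2 ≤ (G.neighborFinset v \ G.neighborFinset u).card := by
    rcases Nat.lt_or_ge (G.neighborFinset v \ G.neighborFinset u).card 2 with h | h
    · exact absurd (by omega : min (G.neighborFinset u \ G.neighborFinset v).card
        (G.neighborFinset v \ G.neighborFinset u).card = 1) hmin
    · exact h
  obtain ⟨a, ha, b, hb, hab⟩ := Finset.one_lt_card.mp h1'
  obtain ⟨c, hc, d, hd, hcd⟩ := Finset.one_lt_card.mp h2'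
  rw [Finset.mem_sdiff] at ha hb hc hd
  have hau : G.Adj u a := by simpa using ha.1
  have hbu : G.Adj u b := by simpa using hb.1
  have hcv : G.Adj v c := by simpa using hc.1
  have hdv : G.Adj v d := by simpa using hd.1
  have hav : ¬ G.Adj v a := by simpa using ha.2
  have hbv : ¬ G.Adj v b := by simpa using hb.2
  have hcu : ¬ G.Adj u c := by simpa using hc.2
  have hdu : ¬ G.Adj u d := by simpa using hd.2
  -- all of a,b,c,d are in A
  have memA : ∀ x : V, G.Adj u x ∨ G.Adj v x → x ∈ A := by
    intro x hx
    rcases (@Finset.mem_union V (fun a b => Classical.propDecidable (a = b)) A B x).mp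
      (Finset.eq_univ_iff_forall.mp hcover x) with h | h
    · exact h
    · rcases hx with hx | hx
      · exact absurd hx (hBind u hu x h)
      · exact absurd hx (hBind v hv x h)
  have haA : a ∈ A := memA a (Or.inl hau)
  have hbA : b ∈ A := memA b (Or.inl hbu)
  have hcA : c ∈ A := memA c (Or.inr hcv)
  have hdA : d ∈ A := memA d (Or.inr hdv)
  have hAB : ∀ x ∈ A, ∀ y ∈ B, x ≠ y := by
    intro x hx y hy h
    exact Finset.disjoint_left.mp hdisj hx (h ▸ hy)
  -- distinctness
  have hac : a ≠ c := fun h => hav (h ▸ hcv)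
  have had : a ≠ d := fun h => hav (h ▸ hdv)
  have hbc : b ≠ c := fun h => hbv (h ▸ hcv)
  have hbd : b ≠ d := fun h => hbv (h ▸ hdv)
  -- non-adjacency among A
  have nab := hAind a haA b hbA
  have nac := hAind a haA c hcA
  have nad := hAind a haA d hdA
  have nbc := hAind b hbA c hcA
  have nbd := hAind b hbA d hdA
  have ncd := hAind c hcA d hdA
  have nuv := hBind u hu v hv
  have hua : u ≠ a := hAB a haA u hu |>.symm
  have hub : u ≠ b := hAB b hbA u hu |>.symm
  have huc : u ≠ c := hAB c hcA u hu |>.symm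
  have hud : u ≠ d := hAB d hdA u hu |>.symm
  have hva : v ≠ a := hAB a haA v hv |>.symm
  have hvb : v ≠ b := hAB b hbA v hv |>.symm
  have hvc : v ≠ c := hAB c hcA v hv |>.symm
  have hvd : v ≠ d := hAB d hdA v hv |>.symm
  apply hfree
  refine ⟨⟨⟨![a, u, b, c, v, d], ?_⟩, ?_⟩⟩
  · intro x y hxy
    fin_cases x <;> fin_cases y <;> first
      | rfl
      | (simp only [Matrix.cons_val_zero, Matrix.cons_val_one, Matrix.head_cons,
          Matrix.cons_val_two, Matrix.tail_cons, Matrix.cons_val_three,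
          Matrix.cons_val_four, Matrix.cons_val_succ, Matrix.cons_val_fin_one,
          Fin.isValue] at hxy
         first
          | exact absurd hxy hab | exact absurd hxy hab.symm
          | exact absurd hxy hcd | exact absurd hxy hcd.symm
          | exact absurd hxy hac | exact absurd hxy hac.symm
          | exact absurd hxy had | exact absurd hxy had.symm
          | exact absurd hxy hbc | exact absurd hxy hbc.symm
          | exact absurd hxy hbd | exact absurd hxy hbd.symm
          | exact absurd hxy hua | exact absurd hxy hua.symm
          | exact absurd hxy hub | exact absurd hxy hub.symm
          | exact absurd hxy huc | exact absurd hxy huc.symm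
          | exact absurd hxy hud | exact absurd hxy hud.symm
          | exact absurd hxy hva | exact absurd hxy hva.symm
          | exact absurd hxy hvb | exact absurd hxy hvb.symm
          | exact absurd hxy hvc | exact absurd hxy hvc.symm
          | exact absurd hxy hvd | exact absurd hxy hvd.symm
          | exact absurd hxy huv | exact absurd hxy huv.symm)
  · intro x y
    fin_cases x <;> fin_cases y <;>
      simp only [twoP3, SimpleGraph.fromRel_adj, Matrix.cons_val', Matrix.cons_val_zero,
        Matrix.cons_val_one, Matrix.head_cons, Matrix.head_fin_const, Matrix.cons_val_fin_one,
        Matrix.empty_val', Fin.mk_zero, Fin.mk_one, Fin.isValue, Matrix.cons_val_succ,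
        List.mem_cons, List.mem_singleton, List.not_mem_nil, Prod.mk.injEq, ne_eq] <;>
      simp <;>
      first
        | exact hau.symm
        | exact hau
        | exact hbu.symm
        | exact hbu
        | exact hcv.symm
        | exact hcv
        | exact hdv.symm
        | exact hdv
        | exact nab
        | exact fun h => nab h.symm
        | exact nac
        | exact fun h => nac h.symm
        | exact nad
        | exact fun h => nad h.symm
        | exact nbc
        | exact fun h => nbc h.symm
        | exact nbd
        | exact fun h => nbd h.symm
        | exact ncd
        | exact fun h => ncd h.symm
        | exact nuv
        | exact fun h => nuv h.symm
        | exact hav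
        | exact fun h => hav h.symm
        | exact hbv
        | exact fun h => hbv h.symm
        | exact hcu
        | exact fun h => hcu h.symm
        | exact hdu
        | exact fun h => hdu h.symm
        | exact G.loopless _
end

section
/- Let G be a finite simple connected split graph with at least two vertices. Then γ_c(G) = γ(G) and γ_t(G) = max(γ(G), 2). -/
open Finset

open scoped Classical

section Stmt16Aux

lemma stmt16_exists_neighbor {V : Type*} [Fintype V] (G : SimpleGraph V)
    (hconn : G.Connected) (hcard : 1 < Fintype.card V) (v : V) :
    ∃ u, G.Adj u v := by
  obtain ⟨w, hw⟩ := Fintype.exists_ne_of_one_lt_card hcard v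
  obtain ⟨p⟩ := hconn v w
  cases p with
  | nil => exact absurd rfl hw.symm
  | cons h q => exact ⟨_, h.symm⟩

lemma stmt16_clique_conn {V : Type*} [Fintype V] (G : SimpleGraph V)
    {K D : Finset V} (hcl : G.IsClique (K : Set V)) (hDK : D ⊆ K) (hne : D.Nonempty) :
    (G.induce (D : Set V)).Connected := by
  rw [SimpleGraph.connected_iff]
  refine ⟨?_, ?_⟩
  · rintro ⟨x, hx⟩ ⟨y, hy⟩
    by_cases hxy : x = y
    · subst hxy; rfl
    · exact SimpleGraph.Adj.reachable (by
        show G.Adj x y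
        exact hcl (hDK hx) (hDK hy) hxy)
  · obtain ⟨a, ha⟩ := hne
    exact ⟨⟨a, ha⟩⟩

lemma stmt16_dom_to_clique {V : Type*} [Fintype V] {G : SimpleGraph V}
    {K I : Finset V} (hSP : IsSplitPartition G K I)
    (hnbr : ∀ v : V, ∃ u, G.Adj u v) :
    ∀ n (D : Finset V), (D \ K).card = n → IsDomSet G D →
      ∃ D', IsDomSet G D' ∧ D' ⊆ K ∧ D'.card ≤ D.card := by
  obtain ⟨hdisj, hcover, hclique, hindep⟩ := hSP
  have hKI : ∀ x : V, x ∉ K → x ∈ I := by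
    intro x hx
    exact (mem_union.mp (hcover.ge (mem_univ x))).resolve_left hx
  have hnbrK : ∀ x y : V, x ∈ I → G.Adj y x → y ∈ K := by
    intro x y hxI hadj
    by_contra hyK
    exact hindep y (hKI y hyK) x hxI hadj
  intro n
  induction n using Nat.strong_induction_on with
  | _ n ih =>
    intro D hn hD
    by_cases hsub : D ⊆ K
    · exact ⟨D, hD, hsub, le_rfl⟩
    · obtain ⟨v, hvD, hvK⟩ := not_subset.mp hsub
      have hvI : v ∈ I := hKI v hvK
      obtain ⟨u, hu⟩ := hnbr v
      have huK : u ∈ K := hnbrK v u hvI hu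
      set D' := insert u (D.erase v) with hD'
      have hdom : IsDomSet G D' := by
        intro w
        rcases hD w with hw | ⟨x, hx, hxw⟩
        · by_cases hwv : w = v
          · exact Or.inr ⟨u, mem_insert_self _ _, hwv ▸ hu⟩
          · exact Or.inl (mem_insert_of_mem (mem_erase.mpr ⟨hwv, hw⟩))
        · by_cases hxv : x = v
          · subst hxv
            have hwK : w ∈ K := hnbrK x w hvI hxw.symm
            by_cases hwu : w = u
            · exact Or.inl (hwu ▸ mem_insert_self _ _)
            · exact Or.inr ⟨u, mem_insert_self _ _,
                hclique huK hwK (fun h => hwu h.symm)⟩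
          · exact Or.inr ⟨x, mem_insert_of_mem (mem_erase.mpr ⟨hxv, hx⟩), hxw⟩
      have hcd : D'.card ≤ D.card := by
        calc D'.card ≤ (D.erase v).card + 1 := card_insert_le _ _
        _ = D.card - 1 + 1 := by rw [card_erase_of_mem hvD]
        _ ≤ D.card := by
            have : 1 ≤ D.card := card_pos.mpr ⟨v, hvD⟩
            omega
      have hmeas : (D' \ K).card < n := by
        have hss : D' \ K ⊆ (D \ K).erase v := by
          intro x hx
          rw [mem_sdiff] at hx
          obtain ⟨hx1, hx2⟩ := hx
          rcases mem_insert.mp hx1 with h | h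
          · exact absurd (h ▸ huK) hx2
          · rw [mem_erase] at h
            exact mem_erase.mpr ⟨h.1, mem_sdiff.mpr ⟨h.2, hx2⟩⟩
        calc (D' \ K).card ≤ ((D \ K).erase v).card := card_le_card hss
        _ < (D \ K).card := card_erase_lt_of_mem (mem_sdiff.mpr ⟨hvD, hvK⟩)
        _ = n := hn
      obtain ⟨D'', h1, h2, h3⟩ := ih _ hmeas D' rfl hdom
      exact ⟨D'', h1, h2, h3.trans hcd⟩

end Stmt16Aux

theorem stmt16 {V : Type*} [Fintype V] [DecidableEq V] (G : SimpleGraph V)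
    (hconn : G.Connected) (hcard : 1 < Fintype.card V)
    (hsplit : ∃ K I : Finset V, IsSplitPartition G K I) :
    gammaC G = gamma G ∧ gammaT G = max (gamma G) 2 := by
  classical
  obtain ⟨K, I, hSP⟩ := hsplit
  have hnbr : ∀ v : V, ∃ u, G.Adj u v := stmt16_exists_neighbor G hconn hcard
  -- a minimum dominating set
  have hne : {n | ∃ D : Finset V, IsDomSet G D ∧ D.card = n}.Nonempty :=
    ⟨_, Finset.univ, fun v => Or.inl (mem_univ v), rfl⟩
  obtain ⟨D0, hD0, hD0card⟩ := Nat.sInf_mem hne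
  obtain ⟨D, hDdom, hDK, hDcard⟩ := stmt16_dom_to_clique hSP hnbr _ D0 rfl hD0
  have hγleD : gamma G ≤ D.card := Nat.sInf_le ⟨D, hDdom, rfl⟩
  have hDγ : D.card = gamma G := le_antisymm (hDcard.trans hD0card.le) hγleD
  have hDne : D.Nonempty := by
    obtain ⟨v⟩ := (Fintype.one_lt_card_iff_nontrivial.mp hcard).to_nonempty
    rcases hDdom v with h | ⟨u, hu, -⟩
    · exact ⟨v, h⟩
    · exact ⟨u, hu⟩
  have hconnD : (G.induce (D : Set V)).Connected :=
    stmt16_clique_conn G hSP.2.2.1 hDK hDne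
  -- gammaC = gamma
  have hCle : gammaC G ≤ gamma G := by
    rw [← hDγ]
    exact Nat.sInf_le ⟨D, hDdom, hconnD, rfl⟩
  have hCne : {n | ∃ D : Finset V, IsDomSet G D ∧
      (G.induce (D : Set V)).Connected ∧ D.card = n}.Nonempty :=
    ⟨_, D, hDdom, hconnD, rfl⟩
  obtain ⟨Dc, hDc, -, hDccard⟩ := Nat.sInf_mem hCne
  have hCge : gamma G ≤ gammaC G := by
    have hm : Dc.card ∈ {n : ℕ | ∃ D : Finset V, IsDomSet G D ∧ D.card = n} := ⟨Dc, hDc, rfl⟩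
    exact (Nat.sInf_le hm).trans_eq hDccard
  -- gammaT
  have hTne : {n | ∃ D : Finset V, (∀ v : V, ∃ u ∈ D, G.Adj u v) ∧ D.card = n}.Nonempty := by
    refine ⟨_, Finset.univ, fun v => ?_, rfl⟩
    obtain ⟨u, hu⟩ := hnbr v
    exact ⟨u, mem_univ u, hu⟩
  obtain ⟨Dt, hDt, hDtcard⟩ := Nat.sInf_mem hTne
  have hTgeγ : gamma G ≤ gammaT G := by
    have hm : Dt.card ∈ {n : ℕ | ∃ D : Finset V, IsDomSet G D ∧ D.card = n} :=
      ⟨Dt, fun v => Or.inr (hDt v), rfl⟩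
    exact (Nat.sInf_le hm).trans_eq hDtcard
  have hTge2 : 2 ≤ gammaT G := by
    have hle : 2 ≤ Dt.card := by
      obtain ⟨v⟩ := (Fintype.one_lt_card_iff_nontrivial.mp hcard).to_nonempty
      obtain ⟨a, haDt, hav⟩ := hDt v
      obtain ⟨b, hbDt, hba⟩ := hDt a
      exact Finset.one_lt_card.mpr ⟨a, haDt, b, hbDt, fun h => G.ne_of_adj hba (h ▸ rfl)⟩
    exact hle.trans_eq hDtcard
  have hTle : gammaT G ≤ max (gamma G) 2 := by
    rcases le_or_gt 2 D.card with h2 | h2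
    · -- D itself is a total dominating set
      have htot : ∀ v : V, ∃ u ∈ D, G.Adj u v := by
        intro v
        rcases hDdom v with hv | hv
        · obtain ⟨u, huD, huv⟩ := Finset.exists_mem_ne h2 v
          exact ⟨u, huD, hSP.2.2.1 (hDK huD) (hDK hv) huv⟩
        · exact hv
      calc gammaT G ≤ D.card := Nat.sInf_le ⟨D, htot, rfl⟩
      _ = gamma G := hDγ
      _ ≤ max (gamma G) 2 := le_max_left _ _
    · -- D = {a}
      obtain ⟨a, ha⟩ := Finset.card_eq_one.mp
        (le_antisymm (by omega) (card_pos.mpr hDne))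
      obtain ⟨w, hw⟩ := hnbr a
      have hwa : w ≠ a := G.ne_of_adj hw
      have htot : ∀ v : V, ∃ u ∈ ({a, w} : Finset V), G.Adj u v := by
        intro v
        rcases hDdom v with hv | ⟨u, huD, huv⟩
        · rw [ha, Finset.mem_singleton] at hv
          subst hv
          exact ⟨w, by simp, hw⟩
        · rw [ha, Finset.mem_singleton] at huD
          subst huD
          exact ⟨u, by simp, huv⟩
      have hc2 : ({a, w} : Finset V).card = 2 := Finset.card_pair (fun h => hwa h.symm)
      calc gammaT G ≤ 2 := Nat.sInf_le ⟨{a, w}, htot, hc2⟩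
      _ ≤ max (gamma G) 2 := le_max_right _ _
  exact ⟨le_antisymm hCle hCge, le_antisymm hTle (max_le hTgeγ hTge2)⟩
end

section
/- Let G be a finite simple connected split graph with at least two vertices, let (K, I) be a split partition of G, and let u, v ∈ K be distinct vertices such that N(u) ∩ I ⊆ N(v) ∩ I. Then γ(G − u) = γ(G), where G − u denotes the subgraph of G induced by V(G) ∖ {u}. -/
open Finset

open scoped Classical

theorem stmt17 {V : Type*} [Fintype V] [DecidableEq V] (G : SimpleGraph V)
    (hconn : G.Connected) (hcard : 1 < Fintype.card V)
    (K I : Finset V) (hsp : IsSplitPartition G K I)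
    (u v : V) (hu : u ∈ K) (hv : v ∈ K) (huv : u ≠ v)
    (hN : G.neighborSet u ∩ (I : Set V) ⊆ G.neighborSet v ∩ (I : Set V)) :
    gamma (G.induce ({u}ᶜ : Set V)) = gamma G := by
  obtain ⟨hdis, huniv, hcl, hind⟩ := hsp
  set G' := G.induce ({u}ᶜ : Set V) with hG'
  have hmem : ∀ x : V, x ∈ K ∨ x ∈ I := by
    intro x
    have h0 : x ∈ (univ : Finset V) := Finset.mem_univ x
    rw [← huniv] at h0
    simp only [Finset.mem_union] at h0
    exact h0
  have hadjvu : G.Adj v u :=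
    hcl (Finset.mem_coe.mpr hv) (Finset.mem_coe.mpr hu) huv.symm
  have hcov : ∀ x, G.Adj u x → x = v ∨ G.Adj v x := by
    intro x hx
    rcases hmem x with hxK | hxI
    · by_cases hxv : x = v
      · exact Or.inl hxv
      · exact Or.inr (hcl (Finset.mem_coe.mpr hv) (Finset.mem_coe.mpr hxK) (Ne.symm hxv))
    · exact Or.inr (hN ⟨hx, Finset.mem_coe.mpr hxI⟩).1
  -- swap an I-vertex adjacent to v
  have hcovW : ∀ w, w ∈ I → G.Adj w v → ∀ x, G.Adj w x → x = v ∨ G.Adj v x := by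
    intro w hwI hwv x hwx
    rcases hmem x with hxK | hxI
    · by_cases hxv : x = v
      · exact Or.inl hxv
      · exact Or.inr (hcl (Finset.mem_coe.mpr hv) (Finset.mem_coe.mpr hxK) (Ne.symm hxv))
    · exact absurd hwx (hind w hwI x hxI)
  -- nonemptiness
  have hne : ∀ {W : Type} [Fintype W] (H : SimpleGraph W),
      {n | ∃ D : Finset W, IsDomSet H D ∧ D.card = n}.Nonempty := by
    intro W _ H
    exact ⟨Finset.univ.card, Finset.univ, fun x => Or.inl (Finset.mem_univ x), rfl⟩
  -- direction 1 : gamma G ≤ gamma G'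
  have hle1 : gamma G ≤ gamma G' := by
    have hmemInf : gamma G' ∈ {n | ∃ D : Finset {x // x ∈ ({u}ᶜ : Set V)},
        IsDomSet G' D ∧ D.card = n} := by
      apply Nat.sInf_mem
      exact ⟨Finset.univ.card, Finset.univ, fun x => Or.inl (Finset.mem_univ x), rfl⟩
    obtain ⟨D', hD', hc'⟩ := hmemInf
    set E : Finset V := D'.image Subtype.val with hE
    have hEu : u ∉ E := by
      intro h
      obtain ⟨y, _, hy⟩ := Finset.mem_image.mp h
      exact y.2 (by simp [hy])
    have hEdom : ∀ x : V, x ≠ u → x ∈ E ∨ ∃ y ∈ E, G.Adj y x := by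
      intro x hx
      have hx' : x ∈ ({u}ᶜ : Set V) := by simp [hx]
      rcases hD' ⟨x, hx'⟩ with h | ⟨y, hy, hadj⟩
      · exact Or.inl (Finset.mem_image.mpr ⟨_, h, rfl⟩)
      · exact Or.inr ⟨y.val, Finset.mem_image.mpr ⟨y, hy, rfl⟩, hadj⟩
    have hcardE : E.card ≤ gamma G' := by
      calc E.card ≤ D'.card := Finset.card_image_le
        _ = gamma G' := hc'
    have hvne : v ≠ u := huv.symm
    rcases hEdom v hvne with hvE | ⟨w, hwE, hwadj⟩
    · -- v ∈ E, so E dominates G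
      have : IsDomSet G E := by
        intro x
        by_cases hxu : x = u
        · exact Or.inr ⟨v, hvE, hxu ▸ hadjvu⟩
        · exact hEdom x hxu
      exact le_trans (Nat.sInf_le ⟨E, this, rfl⟩) hcardE
    · have hwu : w ≠ u := fun h => hEu (h ▸ hwE)
      rcases hmem w with hwK | hwI
      · -- w ∈ K dominates u
        have hwadju : G.Adj w u :=
          hcl (Finset.mem_coe.mpr hwK) (Finset.mem_coe.mpr hu) hwu
        have : IsDomSet G E := by
          intro x
          by_cases hxu : x = u
          · exact Or.inr ⟨w, hwE, hxu ▸ hwadju⟩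
          · exact hEdom x hxu
        exact le_trans (Nat.sInf_le ⟨E, this, rfl⟩) hcardE
      · -- w ∈ I : swap w for v
        set E2 : Finset V := insert v (E.erase w) with hE2
        have hE2dom : IsDomSet G E2 := by
          intro x
          by_cases hxu : x = u
          · exact Or.inr ⟨v, Finset.mem_insert_self _ _, hxu ▸ hadjvu⟩
          rcases hEdom x hxu with hxE | ⟨y, hyE, hyadj⟩
          · by_cases hxw : x = w
            · exact Or.inr ⟨v, Finset.mem_insert_self _ _, hxw ▸ hwadj.symm⟩
            · exact Or.inl (Finset.mem_insert_of_mem (Finset.mem_erase.mpr ⟨hxw, hxE⟩))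
          · by_cases hyw : y = w
            · subst hyw
              rcases hcovW y hwI hwadj x hyadj with hxv | hvx
              · exact Or.inl (hxv ▸ Finset.mem_insert_self _ _)
              · exact Or.inr ⟨v, Finset.mem_insert_self _ _, hvx⟩
            · exact Or.inr ⟨y, Finset.mem_insert_of_mem (Finset.mem_erase.mpr ⟨hyw, hyE⟩), hyadj⟩
        have hcard2 : E2.card ≤ E.card := by
          calc E2.card ≤ (E.erase w).card + 1 := Finset.card_insert_le _ _
            _ = E.card := Finset.card_erase_add_one hwE
        exact le_trans (Nat.sInf_le ⟨E2, hE2dom, rfl⟩) (le_trans hcard2 hcardE)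
  -- direction 2 : gamma G' ≤ gamma G
  have hle2 : gamma G' ≤ gamma G := by
    have hmemInf : gamma G ∈ {n | ∃ D : Finset V, IsDomSet G D ∧ D.card = n} := by
      apply Nat.sInf_mem
      exact ⟨Finset.univ.card, Finset.univ, fun x => Or.inl (Finset.mem_univ x), rfl⟩
    obtain ⟨D, hD, hc⟩ := hmemInf
    obtain ⟨D2, hD2dom, hD2u, hD2card⟩ :
        ∃ D2 : Finset V, IsDomSet G D2 ∧ u ∉ D2 ∧ D2.card ≤ D.card := by
      by_cases huD : u ∈ D
      · refine ⟨insert v (D.erase u), ?_, ?_, ?_⟩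
        · intro x
          rcases hD x with hxD | ⟨y, hyD, hyadj⟩
          · by_cases hxu : x = u
            · exact Or.inr ⟨v, Finset.mem_insert_self _ _, hxu ▸ hadjvu⟩
            · exact Or.inl (Finset.mem_insert_of_mem (Finset.mem_erase.mpr ⟨hxu, hxD⟩))
          · by_cases hyu : y = u
            · subst hyu
              rcases hcov x hyadj with hxv | hvx
              · exact Or.inl (hxv ▸ Finset.mem_insert_self _ _)
              · exact Or.inr ⟨v, Finset.mem_insert_self _ _, hvx⟩
            · exact Or.inr ⟨y, Finset.mem_insert_of_mem (Finset.mem_erase.mpr ⟨hyu, hyD⟩), hyadj⟩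
        · intro h
          rcases Finset.mem_insert.mp h with h | h
          · exact huv h
          · exact (Finset.mem_erase.mp h).1 rfl
        · calc (insert v (D.erase u)).card ≤ (D.erase u).card + 1 := Finset.card_insert_le _ _
            _ = D.card := Finset.card_erase_add_one huD
      · exact ⟨D, hD, huD, le_rfl⟩
    -- transfer D2 to the induced subgraph
    set D' : Finset {x // x ∈ ({u}ᶜ : Set V)} :=
      D2.subtype (fun x => x ∈ ({u}ᶜ : Set V)) with hD'
    have hD'dom : IsDomSet G' D' := by
      rintro ⟨x, hx⟩
      rcases hD2dom x with hxD | ⟨y, hyD, hyadj⟩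
      · exact Or.inl (Finset.mem_subtype.mpr hxD)
      · have hyu : y ∈ ({u}ᶜ : Set V) := by
          simp only [Set.mem_compl_iff, Set.mem_singleton_iff]
          intro h; exact hD2u (h ▸ hyD)
        exact Or.inr ⟨⟨y, hyu⟩, Finset.mem_subtype.mpr hyD, hyadj⟩
    have hD'card : D'.card = D2.card := by
      rw [hD', Finset.card_subtype, Finset.filter_true_of_mem]
      intro x hx
      simp only [Set.mem_compl_iff, Set.mem_singleton_iff]
      intro h; exact hD2u (h ▸ hx)
    calc gamma G' ≤ D'.card := Nat.sInf_le ⟨D', hD'dom, rfl⟩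
      _ = D2.card := hD'card
      _ ≤ D.card := hD2card
      _ = gamma G := hc
  exact le_antisymm hle2 hle1
end
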